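/- arXiv:2303.01073 — 6 statements merged into one kernel-verified Lean document; each statement's English description precedes it below -/
import Mathlib

section
/- Suppose f : ℝᵈ → ℝ is twice differentiable and its Hessian is ν-Hölder continuous with constant H_ν, i.e., ‖∇²f(x) − ∇²f(y)‖ ≤ H_ν ‖x − y‖^ν for all x, y. Then for any convex combination z̄ = Σᵢ λᵢ zᵢ, we have ‖∇f(z̄) − Σᵢ λᵢ ∇f(zᵢ)‖ ≤ (H_ν/(1+ν)) Σᵢ λᵢ ‖zᵢ − z̄‖^{1+ν}. -/
open Finset

lemma taylor_holder {E F : Type*} [NormedAddCommGroup E] [NormedSpace ℝ E]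
    [NormedAddCommGroup F] [NormedSpace ℝ F]
    (g : E → F) (hg : ∀ x, DifferentiableAt ℝ g x)
    (ν H : ℝ) (hν0 : 0 ≤ ν) (hH : 0 ≤ H)
    (hHolder : ∀ x y, ‖fderiv ℝ g x - fderiv ℝ g y‖ ≤ H * ‖x - y‖ ^ ν)
    (x y : E) :
    ‖g y - g x - fderiv ℝ g x (y - x)‖ ≤ H / (1 + ν) * ‖y - x‖ ^ (1 + ν) := by
  rcases eq_or_ne y x with rfl | hxy
  · simp [Real.rpow_pos_of_pos]
    positivity
  set v := y - x with hv
  have hvpos : 0 < ‖v‖ := by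
    rw [hv]; simpa [sub_eq_zero] using hxy
  set φ : ℝ → F := fun t => g (x + t • v) - g x - t • (fderiv ℝ g x v) with hφdef
  have hφ : ∀ t : ℝ, HasDerivAt φ ((fderiv ℝ g (x + t • v) - fderiv ℝ g x) v) t := by
    intro t
    have h1 : HasDerivAt (fun t : ℝ => x + t • v) v t := by
      simpa using ((hasDerivAt_id t).smul_const v).const_add x
    have h2 := ((hg (x + t • v)).hasFDerivAt).comp_hasDerivAt t h1
    have h3 : HasDerivAt (fun t : ℝ => t • (fderiv ℝ g x v)) (fderiv ℝ g x v) t := by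
      simpa using (hasDerivAt_id t).smul_const (fderiv ℝ g x v)
    exact (h2.sub_const (g x)).sub h3
  set B : ℝ → ℝ := fun t => H * ‖v‖ ^ (1 + ν) / (1 + ν) * t ^ (1 + ν) with hBdef
  have hν1 : (0:ℝ) < 1 + ν := by linarith
  have hB : ∀ t : ℝ, HasDerivAt B (H * ‖v‖ ^ (1 + ν) * t ^ ν) t := by
    intro t
    have h := (Real.hasDerivAt_rpow_const (x := t) (p := 1 + ν)
      (Or.inr (by linarith))).const_mul (H * ‖v‖ ^ (1 + ν) / (1 + ν))
    have he : 1 + ν - 1 = ν := by ring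
    rw [he] at h
    refine h.congr_deriv ?_
    field_simp [hν1.ne']
  have key := image_norm_le_of_norm_deriv_right_le_deriv_boundary
    (f := φ) (a := 0) (b := 1)
    (fun t _ => (hφ t).continuousAt.continuousWithinAt)
    (fun t _ => (hφ t).hasDerivWithinAt)
    (B := B) (B' := fun t => H * ‖v‖ ^ (1 + ν) * t ^ ν)
    (by simp [hφdef, hBdef]; positivity)
    (fun t => hB t)
    (fun t ht => by
      have hb := hHolder (x + t • v) x
      have h1 : ‖(fderiv ℝ g (x + t • v) - fderiv ℝ g x) v‖
          ≤ ‖fderiv ℝ g (x + t • v) - fderiv ℝ g x‖ * ‖v‖ :=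
        (fderiv ℝ g (x + t • v) - fderiv ℝ g x).le_opNorm v
      have h2 : ‖x + t • v - x‖ = t * ‖v‖ := by
        simp [norm_smul, abs_of_nonneg ht.1]
      calc ‖(fderiv ℝ g (x + t • v) - fderiv ℝ g x) v‖
          ≤ (H * (t * ‖v‖) ^ ν) * ‖v‖ := by
            refine le_trans h1 (mul_le_mul_of_nonneg_right ?_ (norm_nonneg _))
            rw [← h2]; exact hb
        _ = H * ‖v‖ ^ (1 + ν) * t ^ ν := by
            rw [Real.mul_rpow ht.1 (norm_nonneg v), Real.rpow_add hvpos, Real.rpow_one]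
            ring)
  have := key (x := 1) (by norm_num)
  have hφ1 : φ 1 = g y - g x - fderiv ℝ g x (y - x) := by
    simp [hφdef, hv]
  rw [hφ1] at this
  calc ‖g y - g x - fderiv ℝ g x (y - x)‖ ≤ B 1 := this
    _ = H / (1 + ν) * ‖y - x‖ ^ (1 + ν) := by
        simp [hBdef, hv]; ring

theorem gradient_jensen (d n : ℕ) (f : EuclideanSpace ℝ (Fin d) → ℝ)
    (hf : ∀ x, DifferentiableAt ℝ f x)
    (hf' : ∀ x, DifferentiableAt ℝ (gradient f) x)
    (ν : ℝ) (hν0 : 0 ≤ ν) (hν1 : ν ≤ 1)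
    (H : ℝ) (hH : 0 ≤ H)
    (hHolder : ∀ x y, ‖fderiv ℝ (gradient f) x - fderiv ℝ (gradient f) y‖ ≤ H * ‖x - y‖ ^ ν)
    (z : Fin n → EuclideanSpace ℝ (Fin d)) (lam : Fin n → ℝ)
    (hlam : ∀ i, 0 ≤ lam i) (hsum : ∑ i, lam i = 1)
    (zbar : EuclideanSpace ℝ (Fin d)) (hzbar : zbar = ∑ i, lam i • z i) :
    ‖gradient f zbar - ∑ i, lam i • gradient f (z i)‖
      ≤ H / (1 + ν) * ∑ i, lam i * ‖z i - zbar‖ ^ (1 + ν) := by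
  set g := gradient f with hg
  set A := fderiv ℝ g zbar with hA
  have h0 : ∑ i, lam i • (z i - zbar) = 0 := by
    simp only [smul_sub, Finset.sum_sub_distrib, ← Finset.sum_smul, hsum, one_smul, hzbar,
      sub_self]
  have hA0 : ∑ i, lam i • A (z i - zbar) = 0 := by
    simp_rw [← map_smul, ← map_sum, h0, map_zero]
  have key : gradient f zbar - ∑ i, lam i • gradient f (z i)
      = - ∑ i, lam i • (g (z i) - g zbar - A (z i - zbar)) := by
    have : ∑ i, lam i • (g (z i) - g zbar - A (z i - zbar))
        = (∑ i, lam i • g (z i)) - g zbar - 0 := by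
      simp only [smul_sub, Finset.sum_sub_distrib, ← Finset.sum_smul, hsum, one_smul]
      rw [← hA0]
    rw [this]
    abel
  rw [key, norm_neg]
  calc ‖∑ i, lam i • (g (z i) - g zbar - A (z i - zbar))‖
      ≤ ∑ i, ‖lam i • (g (z i) - g zbar - A (z i - zbar))‖ := norm_sum_le _ _
    _ ≤ ∑ i, lam i * (H / (1 + ν) * ‖z i - zbar‖ ^ (1 + ν)) := by
        refine Finset.sum_le_sum fun i _ => ?_
        rw [norm_smul, Real.norm_eq_abs, abs_of_nonneg (hlam i)]
        exact mul_le_mul_of_nonneg_left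
          (taylor_holder g hf' ν H hν0 hH hHolder zbar (z i)) (hlam i)
    _ = H / (1 + ν) * ∑ i, lam i * ‖z i - zbar‖ ^ (1 + ν) := by
        rw [Finset.mul_sum]; congr 1; ext i; ring
end

section
/- Suppose f : ℝᵈ → ℝ is twice differentiable with ν-Hölder continuous Hessian with constant H_ν. Then for any convex combination z̄ = Σᵢ λᵢ zᵢ, ‖∇f(z̄) − Σᵢ λᵢ ∇f(zᵢ)‖ ≤ (H_ν/(1+ν)) (Σ_{i<j} λᵢ λⱼ ‖zᵢ − zⱼ‖²)^{(1+ν)/2}. -/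
open Finset

lemma taylor_grad {d : ℕ} (f : EuclideanSpace ℝ (Fin d) → ℝ)
    (hf' : ∀ x, DifferentiableAt ℝ (gradient f) x)
    (ν H : ℝ) (hν0 : 0 ≤ ν) (hH : 0 ≤ H)
    (hHolder : ∀ x y, ‖fderiv ℝ (gradient f) x - fderiv ℝ (gradient f) y‖ ≤ H * ‖x - y‖ ^ ν)
    (x y : EuclideanSpace ℝ (Fin d)) :
    ‖gradient f y - gradient f x - fderiv ℝ (gradient f) x (y - x)‖
      ≤ H / (1 + ν) * ‖y - x‖ ^ (1 + ν) := by
  set δ := y - x with hδ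
  set γ : ℝ → EuclideanSpace ℝ (Fin d) := fun t => x + t • δ with hγdef
  have hν1 : (0:ℝ) < 1 + ν := by linarith
  have hγ : ∀ t : ℝ, HasDerivAt γ δ t := by
    intro t
    simpa [hγdef] using ((hasDerivAt_id t).smul_const δ).const_add x
  set g : ℝ → EuclideanSpace ℝ (Fin d) := fun t => gradient f (γ t) with hgdef
  set g' : ℝ → EuclideanSpace ℝ (Fin d) := fun t => fderiv ℝ (gradient f) (γ t) δ with hg'def
  have hg : ∀ t : ℝ, HasDerivAt g (g' t) t := fun t =>
    ((hf' (γ t)).hasFDerivAt.comp_hasDerivAt t (hγ t))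
  have hmeas : Measurable g' := by
    have : g' = deriv g := funext fun t => ((hg t).deriv).symm
    rw [this]; exact measurable_deriv g
  have hbd : ∀ t ∈ Set.Icc (0:ℝ) 1,
      ‖g' t‖ ≤ (‖fderiv ℝ (gradient f) x‖ + H * ‖δ‖ ^ ν) * ‖δ‖ := by
    intro t ht
    have h1 : ‖g' t‖ ≤ ‖fderiv ℝ (gradient f) (γ t)‖ * ‖δ‖ :=
      (fderiv ℝ (gradient f) (γ t)).le_opNorm δ
    have h2 : ‖fderiv ℝ (gradient f) (γ t)‖
        ≤ ‖fderiv ℝ (gradient f) x‖ + H * ‖γ t - x‖ ^ ν := by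
      calc ‖fderiv ℝ (gradient f) (γ t)‖
          ≤ ‖fderiv ℝ (gradient f) (γ t) - fderiv ℝ (gradient f) x‖
            + ‖fderiv ℝ (gradient f) x‖ := by
            have h := norm_add_le (fderiv ℝ (gradient f) (γ t) - fderiv ℝ (gradient f) x)
              (fderiv ℝ (gradient f) x)
            rwa [sub_add_cancel] at h
        _ ≤ H * ‖γ t - x‖ ^ ν + ‖fderiv ℝ (gradient f) x‖ := by
            gcongr; exact hHolder _ _
        _ = _ := by ring
    have h3 : ‖γ t - x‖ ^ ν ≤ ‖δ‖ ^ ν := by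
      apply Real.rpow_le_rpow (norm_nonneg _) _ hν0
      have : γ t - x = t • δ := by simp [hγdef]
      rw [this, norm_smul]
      have : ‖(t:ℝ)‖ ≤ 1 := by rw [Real.norm_eq_abs, abs_of_nonneg ht.1]; exact ht.2
      nlinarith [norm_nonneg δ]
    calc ‖g' t‖ ≤ ‖fderiv ℝ (gradient f) (γ t)‖ * ‖δ‖ := h1
      _ ≤ (‖fderiv ℝ (gradient f) x‖ + H * ‖δ‖ ^ ν) * ‖δ‖ := by
          apply mul_le_mul_of_nonneg_right _ (norm_nonneg _)
          refine h2.trans ?_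
          gcongr
      _ = _ := rfl
  have hint : IntervalIntegrable g' MeasureTheory.volume 0 1 := by
    rw [intervalIntegrable_iff_integrableOn_Ioc_of_le (by norm_num)]
    apply MeasureTheory.Measure.integrableOn_of_bounded
      (by simp : MeasureTheory.volume (Set.Ioc (0:ℝ) 1) ≠ ⊤)
      hmeas.aestronglyMeasurable
    filter_upwards [MeasureTheory.ae_restrict_mem measurableSet_Ioc] with t ht
    exact hbd t ⟨ht.1.le, ht.2⟩
  have hftc : ∫ t in (0:ℝ)..1, g' t = g 1 - g 0 :=
    intervalIntegral.integral_eq_sub_of_hasDerivAt (fun t _ => hg t) hint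
  have hkey : gradient f y - gradient f x - fderiv ℝ (gradient f) x δ
      = ∫ t in (0:ℝ)..1, (g' t - fderiv ℝ (gradient f) x δ) := by
    rw [intervalIntegral.integral_sub hint intervalIntegrable_const, hftc,
      intervalIntegral.integral_const]
    have e1 : g 1 = gradient f y := by
      have : γ 1 = y := by rw [hγdef]; simp [hδ]
      rw [hgdef]; simp only; rw [this]
    have e0 : g 0 = gradient f x := by
      have : γ 0 = x := by rw [hγdef]; simp
      rw [hgdef]; simp only; rw [this]
    rw [e1, e0]
    norm_num
  rw [hkey]
  have hboundae : ∀ t ∈ Set.uIoc (0:ℝ) 1,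
      ‖g' t - fderiv ℝ (gradient f) x δ‖ ≤ H * t ^ ν * ‖δ‖ ^ (1 + ν) := by
    intro t ht
    rw [Set.uIoc_of_le (by norm_num : (0:ℝ) ≤ 1)] at ht
    have h1 : g' t - fderiv ℝ (gradient f) x δ
        = (fderiv ℝ (gradient f) (γ t) - fderiv ℝ (gradient f) x) δ := by
      simp [hg'def]
    rw [h1]
    calc ‖(fderiv ℝ (gradient f) (γ t) - fderiv ℝ (gradient f) x) δ‖
        ≤ ‖fderiv ℝ (gradient f) (γ t) - fderiv ℝ (gradient f) x‖ * ‖δ‖ :=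
          ContinuousLinearMap.le_opNorm _ _
      _ ≤ (H * ‖γ t - x‖ ^ ν) * ‖δ‖ := by
          apply mul_le_mul_of_nonneg_right (hHolder _ _) (norm_nonneg _)
      _ = H * t ^ ν * ‖δ‖ ^ (1 + ν) := by
          have h2 : γ t - x = t • δ := by simp [hγdef]
          rw [h2, norm_smul, Real.norm_eq_abs, abs_of_nonneg ht.1.le,
            Real.mul_rpow ht.1.le (norm_nonneg _)]
          rcases eq_or_ne (‖δ‖) 0 with h | h
          · rw [h, Real.zero_rpow (ne_of_gt hν1)]; ring
          · rw [add_comm 1 ν, Real.rpow_add_one h]; ring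
  calc ‖∫ t in (0:ℝ)..1, (g' t - fderiv ℝ (gradient f) x δ)‖
      ≤ |∫ t in (0:ℝ)..1, H * t ^ ν * ‖δ‖ ^ (1 + ν)| := by
        apply intervalIntegral.norm_integral_le_abs_of_norm_le
        · filter_upwards [MeasureTheory.ae_restrict_mem measurableSet_uIoc] with t ht
          exact hboundae t ht
        · apply IntervalIntegrable.mul_const
          exact (intervalIntegral.intervalIntegrable_rpow' (by linarith)).const_mul H
    _ = H / (1 + ν) * ‖δ‖ ^ (1 + ν) := by
        have : ∫ t in (0:ℝ)..1, H * t ^ ν * ‖δ‖ ^ (1 + ν)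
            = (H * ‖δ‖ ^ (1 + ν)) * ∫ t in (0:ℝ)..1, t ^ ν := by
          rw [← intervalIntegral.integral_const_mul]
          congr 1; ext t; ring
        rw [this, integral_rpow (Or.inl (by linarith)),
          Real.one_rpow, Real.zero_rpow (ne_of_gt (by linarith : (0:ℝ) < ν + 1))]
        rw [abs_of_nonneg (by positivity)]
        ring


lemma double_sum_lt {n : ℕ} (F : Fin n → Fin n → ℝ)
    (hsymm : ∀ i j, F i j = F j i) (hdiag : ∀ i, F i i = 0) :
    2 * (∑ i, ∑ j with i < j, F i j) = ∑ i, ∑ j, F i j := by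
  have hswap : ∑ i, ∑ j with j < i, F i j = ∑ i, ∑ j with i < j, F i j := by
    calc ∑ i, ∑ j with j < i, F i j
        = ∑ i, ∑ j, if j < i then F i j else 0 := by
          simp [Finset.sum_filter]
      _ = ∑ j, ∑ i, if j < i then F i j else 0 := Finset.sum_comm
      _ = ∑ i, ∑ j with i < j, F i j := by
          apply Finset.sum_congr rfl; intro i _
          rw [Finset.sum_filter]
          apply Finset.sum_congr rfl; intro j _
          by_cases h : i < j <;> simp [h, hsymm i j]
  have hsplit : ∀ i, (∑ j, F i j) = (∑ j with i < j, F i j) + ∑ j with j < i, F i j := by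
    intro i
    rw [← Finset.sum_filter_add_sum_filter_not Finset.univ (fun j => i < j) (F i)]
    congr 1
    rw [Finset.sum_filter, Finset.sum_filter]
    apply Finset.sum_congr rfl; intro j _
    rcases lt_trichotomy i j with h | h | h
    · simp [h, not_lt.mpr h.le, asymm h]
    · simp [h, hdiag]
    · simp [h, not_lt_of_gt h, asymm h]
  calc 2 * (∑ i, ∑ j with i < j, F i j)
      = (∑ i, ∑ j with i < j, F i j) + ∑ i, ∑ j with j < i, F i j := by rw [hswap]; ring
    _ = ∑ i, ∑ j, F i j := by rw [← Finset.sum_add_distrib]; exact (Finset.sum_congr rfl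
        fun i _ => (hsplit i).symm)

lemma variance_identity {d n : ℕ} (z : Fin n → EuclideanSpace ℝ (Fin d)) (lam : Fin n → ℝ)
    (hsum : ∑ i, lam i = 1) :
    ∑ i, lam i * ‖z i - (∑ j, lam j • z j)‖ ^ 2
      = ∑ i, ∑ j with i < j, lam i * lam j * ‖z i - z j‖ ^ 2 := by
  set zbar := ∑ j, lam j • z j with hzb
  set A := ∑ i, lam i * ‖z i‖ ^ 2 with hA
  set B := ∑ i, ∑ j, lam i * lam j * (inner ℝ (z i) (z j) : ℝ) with hB
  have hinner_bar : ∀ w : EuclideanSpace ℝ (Fin d),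
      (inner ℝ w zbar : ℝ) = ∑ j, lam j * inner ℝ w (z j) := by
    intro w
    rw [hzb, inner_sum]
    exact Finset.sum_congr rfl fun j _ => real_inner_smul_right _ _ _
  have hbarbar : (inner ℝ zbar zbar : ℝ) = B := by
    rw [hinner_bar, hB]
    apply Finset.sum_congr rfl; intro j _
    rw [real_inner_comm, hinner_bar, Finset.mul_sum]
    apply Finset.sum_congr rfl; intro i _
    rw [real_inner_comm]; ring
  have hLHS : ∑ i, lam i * ‖z i - zbar‖ ^ 2 = A - B := by
    have : ∀ i, lam i * ‖z i - zbar‖ ^ 2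
        = lam i * ‖z i‖ ^ 2 - 2 * (lam i * ∑ j, lam j * inner ℝ (z i) (z j))
          + lam i * ‖zbar‖ ^ 2 := by
      intro i
      rw [norm_sub_sq_real, hinner_bar]; ring
    rw [Finset.sum_congr rfl fun i _ => this i]
    rw [Finset.sum_add_distrib, Finset.sum_sub_distrib, ← Finset.sum_mul, hsum,
      ← Finset.mul_sum]
    have h2 : ∑ i, lam i * ∑ j, lam j * (inner ℝ (z i) (z j) : ℝ) = B := by
      rw [hB]
      apply Finset.sum_congr rfl; intro i _
      rw [Finset.mul_sum]
      exact Finset.sum_congr rfl fun j _ => by ring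
    rw [h2]
    have h3 : ‖zbar‖ ^ 2 = B := by rw [← real_inner_self_eq_norm_sq, hbarbar]
    rw [h3, hA]; ring
  have hRHS : 2 * (∑ i, ∑ j with i < j, lam i * lam j * ‖z i - z j‖ ^ 2) = 2 * A - 2 * B := by
    rw [double_sum_lt (fun i j => lam i * lam j * ‖z i - z j‖ ^ 2)
      (fun i j => by rw [norm_sub_rev]; ring) (fun i => by simp)]
    have : ∀ i j, lam i * lam j * ‖z i - z j‖ ^ 2
        = lam i * lam j * ‖z i‖ ^ 2 - 2 * (lam i * lam j * inner ℝ (z i) (z j))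
          + lam i * lam j * ‖z j‖ ^ 2 := by
      intro i j; rw [norm_sub_sq_real]; ring
    rw [Finset.sum_congr rfl fun i _ => Finset.sum_congr rfl fun j _ => this i j]
    have e1 : ∑ i, ∑ j, lam i * lam j * ‖z i‖ ^ 2 = A := by
      rw [hA]
      apply Finset.sum_congr rfl; intro i _
      rw [show ∑ j, lam i * lam j * ‖z i‖^2 = lam i * ‖z i‖^2 * ∑ j, lam j by
        rw [Finset.mul_sum]; exact Finset.sum_congr rfl fun j _ => by ring]
      rw [hsum]; ring
    have e2 : ∑ i, ∑ j, lam i * lam j * ‖z j‖ ^ 2 = A := by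
      rw [Finset.sum_comm, hA]
      apply Finset.sum_congr rfl; intro j _
      rw [show ∑ i, lam i * lam j * ‖z j‖^2 = lam j * ‖z j‖^2 * ∑ i, lam i by
        rw [Finset.mul_sum]; exact Finset.sum_congr rfl fun i _ => by ring]
      rw [hsum]; ring
    have e3 : ∑ i, ∑ j, (lam i * lam j * ‖z i‖ ^ 2
        - 2 * (lam i * lam j * (inner ℝ (z i) (z j) : ℝ)) + lam i * lam j * ‖z j‖ ^ 2)
        = A - 2 * B + A := by
      rw [show A - 2*B + A = (∑ i, ∑ j, lam i * lam j * ‖z i‖ ^ 2)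
          - 2 * (∑ i, ∑ j, lam i * lam j * (inner ℝ (z i) (z j) : ℝ))
          + ∑ i, ∑ j, lam i * lam j * ‖z j‖ ^ 2 by rw [e1, e2, hB]]
      rw [Finset.mul_sum, ← Finset.sum_sub_distrib, ← Finset.sum_add_distrib]
      apply Finset.sum_congr rfl; intro i _
      rw [Finset.mul_sum, ← Finset.sum_sub_distrib, ← Finset.sum_add_distrib]
    rw [e3]; ring
  linarith [hLHS, hRHS]

theorem gradient_jensen_pairwise (d n : ℕ) (f : EuclideanSpace ℝ (Fin d) → ℝ)
    (hf : ∀ x, DifferentiableAt ℝ f x)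
    (hf' : ∀ x, DifferentiableAt ℝ (gradient f) x)
    (ν : ℝ) (hν0 : 0 ≤ ν) (hν1 : ν ≤ 1)
    (H : ℝ) (hH : 0 ≤ H)
    (hHolder : ∀ x y, ‖fderiv ℝ (gradient f) x - fderiv ℝ (gradient f) y‖ ≤ H * ‖x - y‖ ^ ν)
    (z : Fin n → EuclideanSpace ℝ (Fin d)) (lam : Fin n → ℝ)
    (hlam : ∀ i, 0 ≤ lam i) (hsum : ∑ i, lam i = 1)
    (zbar : EuclideanSpace ℝ (Fin d)) (hzbar : zbar = ∑ i, lam i • z i) :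
    ‖gradient f zbar - ∑ i, lam i • gradient f (z i)‖
      ≤ H / (1 + ν) *
        (∑ i, ∑ j with i < j, lam i * lam j * ‖z i - z j‖ ^ 2) ^ ((1 + ν) / 2) := by
  have hν1' : (0:ℝ) < 1 + ν := by linarith
  have taylor_grad := taylor_grad f hf' ν H hν0 hH hHolder
  have variance_identity := variance_identity z lam hsum
  have hzero : ∑ i, lam i • (z i - zbar) = 0 := by
    calc ∑ i, lam i • (z i - zbar)
        = (∑ i, lam i • z i) - ∑ i, lam i • zbar := by
          simp [smul_sub, Finset.sum_sub_distrib]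
      _ = zbar - (∑ i, lam i) • zbar := by rw [← hzbar, ← Finset.sum_smul]
      _ = 0 := by rw [hsum, one_smul, sub_self]
  have hzero2 : ∑ i, lam i • (fderiv ℝ (gradient f) zbar) (z i - zbar) = 0 := by
    have h : ∀ i, lam i • (fderiv ℝ (gradient f) zbar) (z i - zbar)
        = (fderiv ℝ (gradient f) zbar) (lam i • (z i - zbar)) := fun i => (map_smul _ _ _).symm
    rw [Finset.sum_congr rfl fun i _ => h i, ← map_sum, hzero, map_zero]
  have key : gradient f zbar - ∑ i, lam i • gradient f (z i)
      = -(∑ i, lam i • (gradient f (z i) - gradient f zbar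
          - (fderiv ℝ (gradient f) zbar) (z i - zbar))) := by
    have h1 : ∑ i, lam i • (gradient f (z i) - gradient f zbar
          - (fderiv ℝ (gradient f) zbar) (z i - zbar))
        = (∑ i, lam i • gradient f (z i)) - (∑ i, lam i • gradient f zbar)
          - ∑ i, lam i • (fderiv ℝ (gradient f) zbar) (z i - zbar) := by
      simp [smul_sub, Finset.sum_sub_distrib]
    rw [h1, hzero2, ← Finset.sum_smul, hsum, one_smul, sub_zero]
    abel
  rw [key, norm_neg]
  have step1 : ‖∑ i, lam i • (gradient f (z i) - gradient f zbar
        - (fderiv ℝ (gradient f) zbar) (z i - zbar))‖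
      ≤ H / (1 + ν) * ∑ i, lam i * ‖z i - zbar‖ ^ (1 + ν) := by
    refine (norm_sum_le _ _).trans ?_
    rw [Finset.mul_sum]
    apply Finset.sum_le_sum; intro i _
    rw [norm_smul, Real.norm_eq_abs, abs_of_nonneg (hlam i)]
    calc lam i * ‖gradient f (z i) - gradient f zbar
          - (fderiv ℝ (gradient f) zbar) (z i - zbar)‖
        ≤ lam i * (H / (1 + ν) * ‖z i - zbar‖ ^ (1 + ν)) :=
          mul_le_mul_of_nonneg_left (taylor_grad zbar (z i)) (hlam i)
      _ = H / (1 + ν) * (lam i * ‖z i - zbar‖ ^ (1 + ν)) := by ring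
  refine step1.trans ?_
  apply mul_le_mul_of_nonneg_left _ (by positivity)
  -- Jensen
  have hp : (1:ℝ) ≤ 2 / (1 + ν) := by rw [le_div_iff₀ hν1']; linarith
  have jensen := Real.arith_mean_le_rpow_mean Finset.univ lam
    (fun i => ‖z i - zbar‖ ^ (1 + ν)) (fun i _ => hlam i) hsum
    (fun i _ => Real.rpow_nonneg (norm_nonneg _) _) hp
  have hpow : ∀ i : Fin n, (‖z i - zbar‖ ^ (1 + ν)) ^ ((2:ℝ)/(1+ν)) = ‖z i - zbar‖ ^ (2:ℕ) := by
    intro i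
    rw [← Real.rpow_natCast (‖z i - zbar‖) 2, ← Real.rpow_mul (norm_nonneg _)]
    congr 1
    push_cast
    field_simp
  have h1p : 1/((2:ℝ)/(1+ν)) = (1+ν)/2 := one_div_div _ _
  simp only [hpow, h1p] at jensen
  refine jensen.trans ?_
  apply le_of_eq
  congr 1
  rw [← hzbar] at variance_identity
  exact variance_identity
end

section
/- Suppose f : ℝᵈ → ℝ is twice differentiable with ν-Hölder continuous Hessian with constant H_ν. Then for all x, y ∈ ℝᵈ: f(x) − f(y) ≤ (1/2)⟨∇f(x) + ∇f(y), x − y⟩ + 2 H_ν ‖x − y‖^{2+ν} / ((1+ν)(2+ν)(3+ν)). -/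
open MeasureTheory intervalIntegral Real Set

lemma two_rpow_lower (ν : ℝ) (h0 : 0 ≤ ν) (h1 : ν ≤ 1) :
    (1 + ν) * (3 + ν) ≤ (2:ℝ) ^ (2 + ν) := by
  set L := Real.log 2 with hL
  have hL1 : 0.6931 < L := lt_trans (by norm_num) Real.log_two_gt_d9
  have hL2 : L < 0.6932 := lt_trans Real.log_two_lt_d9 (by norm_num)
  set s : ℝ := 1 - ν with hs
  have hs0 : 0 ≤ s := by simp [hs]; linarith
  have hs1 : s ≤ 1 := by simp [hs]; linarith
  have hx : |(-(s * L))| ≤ 1 := by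
    rw [abs_neg, abs_of_nonneg (by positivity)]
    nlinarith
  have hexp := Real.exp_bound hx (n := 4) (by norm_num)
  have hsum : ∑ m ∈ Finset.range 4, (-(s * L)) ^ m / (m.factorial : ℝ)
      = 1 - s * L + (s * L) ^ 2 / 2 - (s * L) ^ 3 / 6 := by
    simp [Finset.sum_range_succ, Nat.factorial]
    ring
  rw [hsum] at hexp
  have habs : |(-(s*L))| ^ 4 = (s*L)^4 := by
    rw [abs_neg, abs_of_nonneg (by positivity)]
  rw [habs] at hexp
  have hlow : 1 - s * L + (s * L) ^ 2 / 2 - (s * L) ^ 3 / 6 - (s*L)^4 * (5 / 96)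
      ≤ Real.exp (-(s * L)) := by
    have := abs_le.1 hexp
    have h5 : ((4:ℕ).succ : ℝ) / ((4:ℕ).factorial * (4:ℕ)) = 5 / 96 := by
      norm_num [Nat.factorial]
    rw [h5] at this
    linarith [this.1]
  have h2p : (2:ℝ) ^ (2 + ν) = 8 * Real.exp (-(s * L)) := by
    rw [Real.rpow_def_of_pos (by norm_num : (0:ℝ) < 2)]
    rw [← hL]
    have : L * (2 + ν) = L * 3 + -(s * L) := by rw [hs]; ring
    rw [this, Real.exp_add]
    have : Real.exp (L * 3) = 8 := by
      rw [show L * 3 = L + L + L by ring, Real.exp_add, Real.exp_add, hL, Real.exp_log (by norm_num : (0:ℝ) < 2)]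
      norm_num
    rw [this]
  rw [h2p]
  have key : (1 + ν) * (3 + ν) ≤ 8 * (1 - s * L + (s * L) ^ 2 / 2 - (s * L) ^ 3 / 6 - (s*L)^4 * (5 / 96)) := by
    have e1 : (1:ℝ) + ν = 2 - s := by rw [hs]; ring
    have e2 : (3:ℝ) + ν = 4 - s := by rw [hs]; ring
    rw [e1, e2]
    have hLpos : (0:ℝ) < L := by linarith
    have hLsq : (0.48 : ℝ) < L ^ 2 := by nlinarith
    have hL3b : L ^ 3 < 0.334 := by nlinarith
    have hL4b : L ^ 4 < 0.232 := by nlinarith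
    have hc3 : s ^ 3 ≤ s ^ 2 := pow_le_pow_of_le_one hs0 hs1 (by norm_num)
    have hc4 : s ^ 4 ≤ s ^ 2 := pow_le_pow_of_le_one hs0 hs1 (by norm_num)
    have hs2 : (0:ℝ) ≤ s ^ 2 := sq_nonneg s
    have hA : s ^ 3 * L ^ 3 ≤ s ^ 2 * 0.334 :=
      le_trans (mul_le_mul_of_nonneg_right hc3 (by positivity))
        (mul_le_mul_of_nonneg_left hL3b.le hs2)
    have hB : s ^ 4 * L ^ 4 ≤ s ^ 2 * 0.232 :=
      le_trans (mul_le_mul_of_nonneg_right hc4 (by positivity))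
        (mul_le_mul_of_nonneg_left hL4b.le hs2)
    have hC : 0.48 * s ^ 2 ≤ L ^ 2 * s ^ 2 := mul_le_mul_of_nonneg_right hLsq.le hs2
    have hD : L * s ≤ 0.6932 * s := mul_le_mul_of_nonneg_right hL2.le hs0
    have expand : 8*(1 - s*L + (s*L)^2/2 - (s*L)^3/6 - (s*L)^4*(5/96)) - (2-s)*(4-s)
        = s*6 - 8*(L*s) + 4*(L^2*s^2) - s^2 - (4/3)*(s^3*L^3) - (5/12)*(s^4*L^4) := by ring
    clear_value L s
    linarith [hA, hB, hC, hD, hs0, hs2, expand]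
  calc (1 + ν) * (3 + ν) ≤ 8 * (1 - s * L + (s * L) ^ 2 / 2 - (s * L) ^ 3 / 6 - (s*L)^4 * (5 / 96)) := key
    _ ≤ 8 * Real.exp (-(s * L)) := by linarith


set_option maxHeartbeats 2000000 in
theorem trapezoidal_rule_error (d : ℕ) (f : EuclideanSpace ℝ (Fin d) → ℝ)
    (hf : ∀ x, DifferentiableAt ℝ f x)
    (hf' : ∀ x, DifferentiableAt ℝ (gradient f) x)
    (ν : ℝ) (hν0 : 0 ≤ ν) (hν1 : ν ≤ 1)
    (H : ℝ) (hH : 0 ≤ H)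
    (hHolder : ∀ x y, ‖fderiv ℝ (gradient f) x - fderiv ℝ (gradient f) y‖ ≤ H * ‖x - y‖ ^ ν)
    (x y : EuclideanSpace ℝ (Fin d)) :
    f x - f y ≤ (1 / 2) * inner ℝ (gradient f x + gradient f y) (x - y)
      + 2 * H * ‖x - y‖ ^ (2 + ν) / ((1 + ν) * (2 + ν) * (3 + ν)) := by
  set u : EuclideanSpace ℝ (Fin d) := x - y with hu
  set γ : ℝ → EuclideanSpace ℝ (Fin d) := fun t => y + t • u with hγ
  have hγ0 : γ 0 = y := by simp [hγ]
  have hγ1 : γ 1 = x := by simp [hγ, hu]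
  have hγd : ∀ t : ℝ, HasDerivAt γ u t := fun t => by
    have h := ((hasDerivAt_id t).smul_const u).const_add y; rw [one_smul] at h; exact h
  set B : ℝ → _ := fun t => fderiv ℝ (gradient f) (γ t) with hB
  set G : ℝ → ℝ := fun t => inner ℝ (B t u) u with hG
  set g : ℝ → ℝ := fun t => inner ℝ (gradient f (γ t)) u with hg
  set N : ℝ := ‖u‖ ^ (2 + ν) with hN
  have hNnn : 0 ≤ N := by rw [hN]; positivity
  -- derivative facts
  have hgd : ∀ t : ℝ, HasDerivAt g (G t) t := by
    intro t
    have h1 : HasDerivAt (fun s => gradient f (γ s)) (B t u) t :=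
      (hf' (γ t)).hasFDerivAt.comp_hasDerivAt t (hγd t)
    simpa [hg, hG] using h1.inner ℝ (hasDerivAt_const t u)
  have hφd : ∀ t : ℝ, HasDerivAt (fun s => f (γ s)) (g t) t := by
    intro t
    have h1 := (hf (γ t)).hasFDerivAt.comp_hasDerivAt t (hγd t)
    refine h1.congr_deriv ?_
    exact (InnerProductSpace.toDual_symm_apply (𝕜 := ℝ) (E := EuclideanSpace ℝ (Fin d))).symm
  have hψd : ∀ t : ℝ, HasDerivAt (fun s => f (γ s) + (1/2 - s) * g s)
      ((1/2 - t) * G t) t := by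
    intro t
    have h2 : HasDerivAt (fun s : ℝ => (1/2 - s) * g s)
        ((0 - 1) * g t + (1/2 - t) * G t) t :=
      ((hasDerivAt_const t (1/2:ℝ)).sub (hasDerivAt_id t)).mul (hgd t)
    have := (hφd t).add h2
    refine HasDerivAt.congr_deriv this ?_
    try ring
  -- Hölder-type bound for G
  have hGdiff : ∀ t s : ℝ, |G t - G s| ≤ H * |t - s| ^ ν * N := by
    intro t s
    have hγts : γ t - γ s = (t - s) • u := by
      simp [hγ, sub_smul]
      try abel
    have h1 : G t - G s = inner ℝ ((B t - B s) u) u := by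
      simp [hG, ContinuousLinearMap.sub_apply, inner_sub_left]
    rw [h1]
    calc |(inner ℝ ((B t - B s) u) u : ℝ)| ≤ ‖(B t - B s) u‖ * ‖u‖ :=
          abs_real_inner_le_norm _ _
      _ ≤ ‖B t - B s‖ * ‖u‖ * ‖u‖ :=
          mul_le_mul_of_nonneg_right ((B t - B s).le_opNorm u) (norm_nonneg u)
      _ ≤ (H * ‖γ t - γ s‖ ^ ν) * ‖u‖ * ‖u‖ := by
          have := hHolder (γ t) (γ s)
          gcongr
      _ = H * |t - s| ^ ν * N := by
          rw [hγts, norm_smul, Real.norm_eq_abs,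
            Real.mul_rpow (abs_nonneg _) (norm_nonneg _), hN,
            Real.rpow_add' (norm_nonneg u) (by positivity : (2:ℝ) + ν ≠ 0),
            Real.rpow_two]
          ring
  -- measurability of G
  have hγc : Continuous γ := by
    rw [hγ]; exact continuous_const.add (continuous_id.smul continuous_const)
  have hGmeas : Measurable G := by
    have h1 : Measurable B := (measurable_fderiv ℝ (gradient f)).comp hγc.measurable
    have h2 : Measurable (fun t => B t u) :=
      (ContinuousLinearMap.apply ℝ (EuclideanSpace ℝ (Fin d)) u).continuous.measurable.comp h1
    have h3 : Continuous fun v : EuclideanSpace ℝ (Fin d) => (inner ℝ v u : ℝ) :=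
      continuous_id.inner continuous_const
    exact h3.measurable.comp h2
  -- boundedness of G on (0,1]
  set C : ℝ := |G 0| + H * N with hC
  have hGbdd : ∀ t ∈ Set.uIoc (0:ℝ) 1, |G t| ≤ C := by
    intro t ht
    rw [Set.uIoc_of_le (zero_le_one)] at ht
    have h1 : |G t| ≤ |G t - G 0| + |G 0| := by
      have := abs_sub_abs_le_abs_sub (G t) (G 0)
      have h2 := abs_add_le (G t - G 0) (G 0)
      simpa using h2.trans_eq' (by ring_nf)
    have h2 : |t - 0| ^ ν ≤ 1 :=
      Real.rpow_le_one (abs_nonneg _) (by rw [sub_zero, abs_of_pos ht.1]; exact ht.2) hν0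
    have h3 := hGdiff t 0
    have h4 : H * |t - 0| ^ ν * N ≤ H * 1 * N := by gcongr
    rw [hC]; calc |G t| ≤ |G t - G 0| + |G 0| := h1
      _ ≤ H * 1 * N + |G 0| := by linarith
      _ = |G 0| + H * N := by ring
  -- integrability
  have hint : ∀ c : ℝ, IntervalIntegrable (fun t => (1/2 - t) * (G t - c)) volume 0 1 := by
    intro c
    rw [intervalIntegrable_iff]
    refine Integrable.mono' (g := fun _ => (3/2) * (C + |c|))
      (integrableOn_const (lt_top_iff_ne_top.1 ?_))
      (((measurable_const.sub measurable_id).mul (hGmeas.sub measurable_const)).aestronglyMeasurable)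
      ?_
    · rw [Set.uIoc_of_le (zero_le_one)]; exact measure_Ioc_lt_top
    · filter_upwards [ae_restrict_mem measurableSet_uIoc] with t ht
      have h1 := hGbdd t ht
      rw [Set.uIoc_of_le (zero_le_one)] at ht
      have h2 : |(1:ℝ)/2 - t| ≤ 3/2 := by
        rw [abs_le]; constructor <;> [linarith [ht.2]; linarith [ht.1.le]]
      have h3 : |G t - c| ≤ C + |c| := by
        calc |G t - c| ≤ |G t| + |c| := abs_sub _ _
          _ ≤ C + |c| := by linarith
      calc ‖(1/2 - t) * (G t - c)‖ = |1/2 - t| * |G t - c| := abs_mul _ _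
        _ ≤ (3/2) * (C + |c|) := by
            apply mul_le_mul h2 h3 (abs_nonneg _) (by norm_num)
  have hint0 : IntervalIntegrable (fun t => (1/2 - t) * G t) volume 0 1 := by
    simpa using hint 0
  -- FTC
  have hFTC : ∫ t in (0:ℝ)..1, (1/2 - t) * G t = (f x - f y) - (1/2) * (g 1 + g 0) := by
    rw [intervalIntegral.integral_eq_sub_of_hasDerivAt (fun t _ => hψd t) hint0]
    rw [hγ0, hγ1]
    ring
  -- split off constant
  have hsub : ∫ t in (0:ℝ)..1, (1/2 - t) * G (1/2) = 0 := by
    have hid : IntervalIntegrable (fun t : ℝ => t) volume 0 1 :=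
      continuous_id.intervalIntegrable _ _
    have hz : ∫ t in (0:ℝ)..1, (1/2 - t) = 0 := by
      rw [intervalIntegral.integral_sub intervalIntegrable_const hid,
        intervalIntegral.integral_const, integral_id]
      norm_num
    rw [intervalIntegral.integral_mul_const, hz, zero_mul]
  have hsplit : ∫ t in (0:ℝ)..1, (1/2 - t) * G t
      = ∫ t in (0:ℝ)..1, (1/2 - t) * (G t - G (1/2)) := by
    have h1 : ∫ t in (0:ℝ)..1, (1/2 - t) * (G t - G (1/2))
        = (∫ t in (0:ℝ)..1, (1/2 - t) * G t) - ∫ t in (0:ℝ)..1, (1/2 - t) * G (1/2) := by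
      have hconst : IntervalIntegrable (fun t : ℝ => (1/2 - t) * G (1/2)) volume 0 1 :=
        (((continuous_const.sub continuous_id).mul continuous_const).intervalIntegrable _ _ :
          IntervalIntegrable (fun t : ℝ => (1/2 - t) * G (1/2)) volume 0 1)
      rw [← intervalIntegral.integral_sub hint0 hconst]
      congr 1; ext t; ring
    rw [h1, hsub, sub_zero]
  -- bound the error integral
  have hcontb : Continuous fun t : ℝ => |t - 1/2| ^ (1 + ν) :=
    ((continuous_id.sub continuous_const).abs).rpow_const (fun _ => Or.inr (by positivity))
  have hIval : ∫ t in (0:ℝ)..1, |t - 1/2| ^ (1 + ν)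
      = 2 * (1/2) ^ (2 + ν) / (2 + ν) := by
    have hhalf : ∫ t in (0:ℝ)..(1/2:ℝ), (t:ℝ) ^ (1 + ν)
        = (1/2) ^ (2 + ν) / (2 + ν) := by
      rw [integral_rpow (Or.inl (by linarith : (-1:ℝ) < 1 + ν))]
      rw [Real.zero_rpow (by positivity : (1:ℝ) + ν + 1 ≠ 0)]
      rw [show (1:ℝ) + ν + 1 = 2 + ν by ring]
      ring
    have hL : ∫ t in (0:ℝ)..(1/2:ℝ), |t - 1/2| ^ (1 + ν)
        = (1/2) ^ (2 + ν) / (2 + ν) := by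
      rw [intervalIntegral.integral_congr (g := fun t : ℝ => ((1:ℝ)/2 - t) ^ (1 + ν)) ?_]
      · have := intervalIntegral.integral_comp_sub_left
          (a := 0) (b := 1/2) (fun t : ℝ => (t:ℝ) ^ (1 + ν)) (1/2)
        simp only [sub_self, sub_zero] at this
        rw [this, hhalf]
      · intro t ht
        rw [Set.uIcc_of_le (by norm_num : (0:ℝ) ≤ 1/2)] at ht
        obtain ⟨ht1, ht2⟩ := Set.mem_Icc.mp ht
        show |t - 1/2| ^ (1 + ν) = ((1:ℝ)/2 - t) ^ (1 + ν)
        rw [abs_of_nonpos (by linarith : t - 1/2 ≤ 0)]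
        ring_nf
    have hR : ∫ t in (1/2:ℝ)..1, |t - 1/2| ^ (1 + ν)
        = (1/2) ^ (2 + ν) / (2 + ν) := by
      rw [intervalIntegral.integral_congr (g := fun t : ℝ => (t - 1/2) ^ (1 + ν)) ?_]
      · have := intervalIntegral.integral_comp_sub_right
          (a := 1/2) (b := 1) (fun t : ℝ => (t:ℝ) ^ (1 + ν)) (1/2)
        simp only [sub_self] at this
        rw [this, show (1:ℝ) - 1/2 = 1/2 by norm_num, hhalf]
      · intro t ht
        rw [Set.uIcc_of_le (by norm_num : (1/2:ℝ) ≤ 1)] at ht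
        obtain ⟨ht1, ht2⟩ := Set.mem_Icc.mp ht
        show |t - 1/2| ^ (1 + ν) = (t - 1/2) ^ (1 + ν)
        rw [abs_of_nonneg (by linarith : (0:ℝ) ≤ t - 1/2)]
    rw [← intervalIntegral.integral_add_adjacent_intervals
      (hcontb.intervalIntegrable 0 (1/2)) (hcontb.intervalIntegrable (1/2) 1), hL, hR]
    ring
  have hbound : ∫ t in (0:ℝ)..1, (1/2 - t) * (G t - G (1/2))
      ≤ H * N * (2 * (1/2) ^ (2 + ν) / (2 + ν)) := by
    have h1 : ∀ t : ℝ, ‖(1/2 - t) * (G t - G (1/2))‖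
        ≤ H * N * |t - 1/2| ^ (1 + ν) := by
      intro t
      have h2 := hGdiff t (1/2)
      calc ‖(1/2 - t) * (G t - G (1/2))‖ = |1/2 - t| * |G t - G (1/2)| := abs_mul _ _
        _ ≤ |1/2 - t| * (H * |t - 1/2| ^ ν * N) :=
            mul_le_mul_of_nonneg_left h2 (abs_nonneg _)
        _ = H * N * (|t - 1/2| * |t - 1/2| ^ ν) := by
            rw [abs_sub_comm]; ring
        _ = H * N * |t - 1/2| ^ (1 + ν) := by
            rw [Real.rpow_add' (abs_nonneg _) (by positivity : (1:ℝ) + ν ≠ 0),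
              Real.rpow_one]
    have h3 := intervalIntegral.norm_integral_le_of_norm_le
      (f := fun t => (1/2 - t) * (G t - G (1/2)))
      (g := fun t => H * N * |t - 1/2| ^ (1 + ν)) (μ := volume) (a := 0) (b := 1)
      zero_le_one (Filter.Eventually.of_forall (fun t _ => h1 t))
      ((continuous_const.mul hcontb).intervalIntegrable _ _)
    have h4 : ∫ t in (0:ℝ)..1, H * N * |t - 1/2| ^ (1 + ν)
        = H * N * (2 * (1/2) ^ (2 + ν) / (2 + ν)) := by
      rw [intervalIntegral.integral_const_mul, hIval]
    rw [h4] at h3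
    have h5 : |H * N * (2 * (1/2) ^ (2 + ν) / (2 + ν))|
        = H * N * (2 * (1/2) ^ (2 + ν) / (2 + ν)) := by
      apply abs_of_nonneg; positivity
    exact (le_abs_self _).trans h3
  -- scalar inequality
  have hscalar : H * N * (2 * (1/2) ^ (2 + ν) / (2 + ν))
      ≤ 2 * H * N / ((1 + ν) * (2 + ν) * (3 + ν)) := by
    have hP : (0:ℝ) < (2:ℝ) ^ (2 + ν) := Real.rpow_pos_of_pos (by norm_num) _
    have haux := two_rpow_lower ν hν0 hν1
    have hhalfpow : ((1:ℝ)/2) ^ (2 + ν) = ((2:ℝ) ^ (2 + ν))⁻¹ := by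
      rw [show (1:ℝ)/2 = 2⁻¹ by norm_num, Real.inv_rpow (by norm_num : (0:ℝ) ≤ 2)]
    have h6 : 2 * ((2:ℝ) ^ (2 + ν))⁻¹ / (2 + ν) = 2 / ((2:ℝ) ^ (2 + ν) * (2 + ν)) := by
      rw [← div_eq_mul_inv, div_div]
    have h7 : (1 + ν) * (2 + ν) * (3 + ν) ≤ (2:ℝ) ^ (2 + ν) * (2 + ν) := by
      have := mul_le_mul_of_nonneg_right haux (by linarith : (0:ℝ) ≤ 2 + ν)
      nlinarith
    have h8 : 2 / ((2:ℝ) ^ (2 + ν) * (2 + ν)) ≤ 2 / ((1 + ν) * (2 + ν) * (3 + ν)) :=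
      div_le_div_of_nonneg_left (by norm_num) (by positivity) h7
    calc H * N * (2 * (1/2) ^ (2 + ν) / (2 + ν))
        = H * N * (2 / ((2:ℝ) ^ (2 + ν) * (2 + ν))) := by rw [hhalfpow, h6]
      _ ≤ H * N * (2 / ((1 + ν) * (2 + ν) * (3 + ν))) :=
          mul_le_mul_of_nonneg_left h8 (mul_nonneg hH hNnn)
      _ = 2 * H * N / ((1 + ν) * (2 + ν) * (3 + ν)) := by ring
  -- final assembly
  have hinner : (inner ℝ (gradient f x + gradient f y) u : ℝ) = g 1 + g 0 := by
    rw [hg]; simp only [hγ0, hγ1]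
    rw [inner_add_left]
  have hgoal : f x - f y = (1/2) * (g 1 + g 0)
      + ∫ t in (0:ℝ)..1, (1/2 - t) * (G t - G (1/2)) := by
    rw [← hsplit, hFTC]; ring
  rw [hgoal, hinner]
  have := hbound.trans hscalar
  linarith
end

section
/- Let f : ℝᵈ → ℝ be twice differentiable with ν-Hölder continuous Hessian with constant H_ν for some ν ∈ [0,1]. Define the heavy-ball iterates with v₀ = 0, vₖ = vₖ₋₁ − (1/ℓ)∇f(xₖ₋₁), xₖ = xₖ₋₁ + vₖ for ℓ > 0, and x̄ₖ = (1/k) Σ_{i=0}^{k−1} xᵢ, Sₖ = Σ_{i=1}^{k} ‖vᵢ‖². Then for all k ≥ 1: ‖∇f(x̄ₖ)‖ ≤ (ℓ/k)‖vₖ‖ + (H_ν/(1+ν)) (k Sₖ/8)^{(1+ν)/2}. -/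
open Finset intervalIntegral MeasureTheory


lemma sum_range_cast_real (n : ℕ) : ∑ i ∈ range n, (i : ℝ) = n * (n - 1) / 2 := by
  induction n with
  | zero => simp
  | succ n ih => rw [Finset.sum_range_succ, ih]; push_cast; ring

lemma tri_split {M : Type*} [AddCommMonoid M] (k : ℕ) (F : ℕ → ℕ → M) :
    ∑ j ∈ range k, ∑ i ∈ range k, F j i
      = (∑ j ∈ range k, ∑ i ∈ range j, F j i) + (∑ j ∈ range k, F j j)
        + ∑ j ∈ range k, ∑ i ∈ range j, F i j := by
  induction k with
  | zero => simp
  | succ k ih =>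
    simp only [Finset.sum_range_succ, Finset.sum_add_distrib, ih]
    abel

lemma variance_ident {E : Type*} [NormedAddCommGroup E] [InnerProductSpace ℝ E]
    (k : ℕ) (a : ℕ → E) (h0 : ∑ i ∈ range k, a i = 0) :
    ∑ j ∈ range k, ∑ i ∈ range j, ‖a j - a i‖ ^ 2
      = k * ∑ i ∈ range k, ‖a i‖ ^ 2 := by
  have hinner : ∑ j ∈ range k, ∑ i ∈ range k, (inner ℝ (a j) (a i) : ℝ) = 0 := by
    have : (inner ℝ (∑ j ∈ range k, a j) (∑ i ∈ range k, a i) : ℝ) = 0 := by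
      rw [h0]; simp
    rw [sum_inner] at this
    simpa [inner_sum] using this
  have tri := tri_split k (fun j i => (inner ℝ (a j) (a i) : ℝ))
  have hdiag : ∑ j ∈ range k, (inner ℝ (a j) (a j) : ℝ) = ∑ j ∈ range k, ‖a j‖ ^ 2 := by
    simp [real_inner_self_eq_norm_sq]
  have hcomm : (∑ j ∈ range k, ∑ i ∈ range j, (inner ℝ (a i) (a j) : ℝ))
      = ∑ j ∈ range k, ∑ i ∈ range j, (inner ℝ (a j) (a i) : ℝ) := by
    simp [real_inner_comm]
  have hcross : ∑ j ∈ range k, ∑ i ∈ range j, (inner ℝ (a j) (a i) : ℝ)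
      = -(∑ i ∈ range k, ‖a i‖ ^ 2) / 2 := by
    rw [hinner, hdiag, hcomm] at tri
    linarith
  have htriN := tri_split k (fun j i => ‖a j‖ ^ 2 + ‖a i‖ ^ 2)
  have hLHS : ∑ j ∈ range k, ∑ i ∈ range k, (‖a j‖ ^ 2 + ‖a i‖ ^ 2)
      = 2 * k * ∑ i ∈ range k, ‖a i‖ ^ 2 := by
    simp only [Finset.sum_add_distrib, Finset.sum_const, Finset.card_range, nsmul_eq_mul]
    rw [← Finset.mul_sum]
    ring
  have hsym : (∑ j ∈ range k, ∑ i ∈ range j, (‖a i‖ ^ 2 + ‖a j‖ ^ 2))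
      = ∑ j ∈ range k, ∑ i ∈ range j, (‖a j‖ ^ 2 + ‖a i‖ ^ 2) := by
    simp [add_comm]
  have hN : ∑ j ∈ range k, ∑ i ∈ range j, (‖a j‖ ^ 2 + ‖a i‖ ^ 2)
      = (k - 1) * ∑ i ∈ range k, ‖a i‖ ^ 2 := by
    rw [hLHS, hsym] at htriN
    have hd : ∑ j ∈ range k, (‖a j‖ ^ 2 + ‖a j‖ ^ 2) = 2 * ∑ i ∈ range k, ‖a i‖ ^ 2 := by
      rw [Finset.mul_sum]; congr 1; ext j; ring
    rw [hd] at htriN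
    linarith
  calc ∑ j ∈ range k, ∑ i ∈ range j, ‖a j - a i‖ ^ 2
      = ∑ j ∈ range k, ∑ i ∈ range j,
          ((‖a j‖ ^ 2 + ‖a i‖ ^ 2) - 2 * (inner ℝ (a j) (a i) : ℝ)) := by
        congr 1; ext j; congr 1; ext i
        rw [norm_sub_sq_real]; ring
    _ = (∑ j ∈ range k, ∑ i ∈ range j, (‖a j‖ ^ 2 + ‖a i‖ ^ 2))
        - 2 * ∑ j ∈ range k, ∑ i ∈ range j, (inner ℝ (a j) (a i) : ℝ) := by
        simp only [Finset.sum_sub_distrib, Finset.mul_sum]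
    _ = k * ∑ i ∈ range k, ‖a i‖ ^ 2 := by
        rw [hN, hcross]; ring


lemma taylor_holder_s7 (d : ℕ) (G : EuclideanSpace ℝ (Fin d) → EuclideanSpace ℝ (Fin d))
    (hG : ∀ z, DifferentiableAt ℝ G z)
    (ν : ℝ) (hν0 : 0 ≤ ν) (H : ℝ) (hH : 0 ≤ H)
    (hHolder : ∀ z y, ‖fderiv ℝ G z - fderiv ℝ G y‖ ≤ H * ‖z - y‖ ^ ν)
    (p q : EuclideanSpace ℝ (Fin d)) :
    ‖G q - G p - fderiv ℝ G p (q - p)‖ ≤ H / (1 + ν) * ‖q - p‖ ^ (1 + ν) := by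
  have hν1 : (0:ℝ) < 1 + ν := by linarith
  by_cases hw0 : q - p = 0
  · rw [sub_eq_zero] at hw0
    subst hw0
    simp [Real.zero_rpow (ne_of_gt hν1)]
  set w := q - p with hwdef
  have hwpos : 0 < ‖w‖ := norm_pos_iff.mpr hw0
  set c : ℝ → EuclideanSpace ℝ (Fin d) := fun t => p + t • w with hc
  have hderiv : ∀ t : ℝ, HasDerivAt (fun s => G (c s)) ((fderiv ℝ G (c t)) w) t := by
    intro t
    have h1 : HasDerivAt c w t := by
      have := ((hasDerivAt_id' t).smul_const w).const_add p
      simp only [one_smul] at this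
      exact this
    exact (hG (c t)).hasFDerivAt.comp_hasDerivAt t h1
  have hcont : Continuous c := by fun_prop
  have hmeas : Measurable (fun t : ℝ => (fderiv ℝ G (c t)) w) :=
    (ContinuousLinearMap.measurable_apply w).comp ((measurable_fderiv ℝ G).comp hcont.measurable)
  have hdiffbound : ∀ t : ℝ, 0 ≤ t →
      ‖fderiv ℝ G (c t) - fderiv ℝ G p‖ ≤ H * (t ^ ν * ‖w‖ ^ ν) := by
    intro t ht
    have h := hHolder (c t) p
    have hct : c t - p = t • w := by simp [hc]
    rw [hct, norm_smul, Real.norm_eq_abs, abs_of_nonneg ht,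
      Real.mul_rpow ht (norm_nonneg w)] at h
    exact h
  have hABnd : ∀ t ∈ Set.Ioc (0:ℝ) 1,
      ‖(fderiv ℝ G (c t)) w‖ ≤ (‖fderiv ℝ G p‖ + H * ‖w‖ ^ ν) * ‖w‖ := by
    intro t ht
    have h1 : ‖fderiv ℝ G (c t)‖ ≤ ‖fderiv ℝ G p‖ + H * (t ^ ν * ‖w‖ ^ ν) := by
      have h2 := hdiffbound t ht.1.le
      have h3 : ‖fderiv ℝ G (c t)‖ - ‖fderiv ℝ G p‖ ≤ ‖fderiv ℝ G (c t) - fderiv ℝ G p‖ :=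
        norm_sub_norm_le _ _
      linarith
    have htν : t ^ ν ≤ 1 := Real.rpow_le_one ht.1.le ht.2 hν0
    calc ‖(fderiv ℝ G (c t)) w‖ ≤ ‖fderiv ℝ G (c t)‖ * ‖w‖ :=
          ContinuousLinearMap.le_opNorm _ _
      _ ≤ (‖fderiv ℝ G p‖ + H * ‖w‖ ^ ν) * ‖w‖ := by
          apply mul_le_mul_of_nonneg_right _ (norm_nonneg w)
          have : H * (t ^ ν * ‖w‖ ^ ν) ≤ H * ‖w‖ ^ ν := by
            have h2 : t ^ ν * ‖w‖ ^ ν ≤ 1 * ‖w‖ ^ ν :=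
              mul_le_mul_of_nonneg_right htν (Real.rpow_nonneg (norm_nonneg w) ν)
            nlinarith [Real.rpow_nonneg (norm_nonneg w) ν]
          linarith
  have hint : IntervalIntegrable (fun t => (fderiv ℝ G (c t)) w) volume 0 1 := by
    rw [intervalIntegrable_iff, Set.uIoc_of_le (by norm_num : (0:ℝ) ≤ 1)]
    apply MeasureTheory.Integrable.mono'
      (g := fun _ : ℝ => (‖fderiv ℝ G p‖ + H * ‖w‖ ^ ν) * ‖w‖)
      (MeasureTheory.integrableOn_const measure_Ioc_lt_top.ne)
      hmeas.aestronglyMeasurable.restrict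
    filter_upwards [MeasureTheory.ae_restrict_mem measurableSet_Ioc] with t ht
    exact hABnd t ht
  have key : ∫ t in (0:ℝ)..1, (fderiv ℝ G (c t)) w = G q - G p := by
    have h := intervalIntegral.integral_eq_sub_of_hasDerivAt
      (f := fun s => G (c s)) (f' := fun t => (fderiv ℝ G (c t)) w)
      (fun t _ => hderiv t) hint
    have h1 : c 1 = q := by simp [hc, hwdef]
    have h0 : c 0 = p := by simp [hc]
    simpa only [h1, h0] using h
  have hsub : G q - G p - fderiv ℝ G p w
      = ∫ t in (0:ℝ)..1, ((fderiv ℝ G (c t)) w - (fderiv ℝ G p) w) := by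
    rw [intervalIntegral.integral_sub hint intervalIntegrable_const, key,
      intervalIntegral.integral_const]
    simp
  rw [hsub]
  have hptw : ∀ t ∈ Set.Ioc (0:ℝ) 1,
      ‖(fderiv ℝ G (c t)) w - (fderiv ℝ G p) w‖ ≤ H * ‖w‖ ^ (1 + ν) * t ^ ν := by
    intro t ht
    have h1 : (fderiv ℝ G (c t)) w - (fderiv ℝ G p) w
        = (fderiv ℝ G (c t) - fderiv ℝ G p) w := by simp
    rw [h1]
    calc ‖(fderiv ℝ G (c t) - fderiv ℝ G p) w‖
        ≤ ‖fderiv ℝ G (c t) - fderiv ℝ G p‖ * ‖w‖ := ContinuousLinearMap.le_opNorm _ _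
      _ ≤ H * (t ^ ν * ‖w‖ ^ ν) * ‖w‖ :=
          mul_le_mul_of_nonneg_right (hdiffbound t ht.1.le) (norm_nonneg w)
      _ = H * ‖w‖ ^ (1 + ν) * t ^ ν := by
          rw [Real.rpow_add hwpos, Real.rpow_one]; ring
  have hg_int : IntervalIntegrable (fun t : ℝ => H * ‖w‖ ^ (1 + ν) * t ^ ν) volume 0 1 :=
    (intervalIntegral.intervalIntegrable_rpow' (by linarith : (-1:ℝ) < ν)).const_mul _
  have hnorm : ‖∫ t in (0:ℝ)..1, ((fderiv ℝ G (c t)) w - (fderiv ℝ G p) w)‖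
      ≤ |∫ t in (0:ℝ)..1, H * ‖w‖ ^ (1 + ν) * t ^ ν| := by
    apply intervalIntegral.norm_integral_le_abs_of_norm_le _ hg_int
    rw [Set.uIoc_of_le (by norm_num : (0:ℝ) ≤ 1)]
    filter_upwards [MeasureTheory.ae_restrict_mem measurableSet_Ioc] with t ht
    exact hptw t ht
  have hval : ∫ t in (0:ℝ)..1, H * ‖w‖ ^ (1 + ν) * t ^ ν
      = H / (1 + ν) * ‖w‖ ^ (1 + ν) := by
    rw [intervalIntegral.integral_const_mul,
      integral_rpow (Or.inl (by linarith : (-1:ℝ) < ν)),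
      Real.one_rpow, Real.zero_rpow (by linarith : ν + 1 ≠ 0), sub_zero]
    rw [mul_one_div, show ν + 1 = 1 + ν from by ring, div_mul_eq_mul_div]
  have hfin : |∫ t in (0:ℝ)..1, H * ‖w‖ ^ (1 + ν) * t ^ ν|
      = H / (1 + ν) * ‖w‖ ^ (1 + ν) := by
    rw [hval, abs_of_nonneg]
    positivity
  calc ‖∫ t in (0:ℝ)..1, ((fderiv ℝ G (c t)) w - (fderiv ℝ G p) w)‖
      ≤ |∫ t in (0:ℝ)..1, H * ‖w‖ ^ (1 + ν) * t ^ ν| := hnorm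
    _ = H / (1 + ν) * ‖w‖ ^ (1 + ν) := hfin


theorem grad_norm_xbar_upperbound (d : ℕ) (f : EuclideanSpace ℝ (Fin d) → ℝ)
    (hf : ∀ x, DifferentiableAt ℝ f x)
    (hf' : ∀ x, DifferentiableAt ℝ (gradient f) x)
    (ν : ℝ) (hν0 : 0 ≤ ν) (hν1 : ν ≤ 1)
    (H : ℝ) (hH : 0 ≤ H)
    (hHolder : ∀ x y, ‖fderiv ℝ (gradient f) x - fderiv ℝ (gradient f) y‖ ≤ H * ‖x - y‖ ^ ν)
    (ℓ : ℝ) (hℓ : 0 < ℓ)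
    (x v : ℕ → EuclideanSpace ℝ (Fin d))
    (hv0 : v 0 = 0)
    (hv : ∀ k, 1 ≤ k → v k = v (k - 1) - (1 / ℓ) • gradient f (x (k - 1)))
    (hx : ∀ k, 1 ≤ k → x k = x (k - 1) + v k)
    (xbar : ℕ → EuclideanSpace ℝ (Fin d))
    (hxbar : ∀ k, 1 ≤ k → xbar k = (1 / (k : ℝ)) • ∑ i ∈ range k, x i)
    (S : ℕ → ℝ) (hS : ∀ k, S k = ∑ i ∈ Icc 1 k, ‖v i‖ ^ 2)
    (k : ℕ) (hk : 1 ≤ k) :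
    ‖gradient f (xbar k)‖
      ≤ (ℓ / k) * ‖v k‖ + H / (1 + ν) * ((k * S k) / 8) ^ ((1 + ν) / 2) := by
  set G := gradient f with hG
  -- telescoping for x
  have hxrec : ∀ j, x j = x 0 + ∑ m ∈ Ioc 0 j, v m := by
    intro j
    induction j with
    | zero => simp
    | succ j ih =>
      have h1 := hx (j + 1) (by omega)
      simp only [Nat.add_sub_cancel] at h1
      rw [h1, ih, Finset.sum_Ioc_succ_top (Nat.zero_le j)]
      abel
  have hxdiff : ∀ i j, i ≤ j → x j - x i = ∑ m ∈ Ioc i j, v m := by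
    intro i j hij
    have h := Finset.sum_Ioc_consecutive (fun m => v m) (Nat.zero_le i) hij
    rw [hxrec i, hxrec j, ← h]
    abel
  -- Cauchy-Schwarz step
  have hCS : ∀ i j, i ≤ j → ‖x j - x i‖ ^ 2 ≤ ((j : ℝ) - i) * ∑ m ∈ Ioc i j, ‖v m‖ ^ 2 := by
    intro i j hij
    have h1 : ‖x j - x i‖ ≤ ∑ m ∈ Ioc i j, ‖v m‖ := by
      rw [hxdiff i j hij]; exact norm_sum_le _ _
    have h2 : ‖x j - x i‖ ^ 2 ≤ (∑ m ∈ Ioc i j, ‖v m‖) ^ 2 := by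
      apply pow_le_pow_left₀ (norm_nonneg _) h1
    have h3 : (∑ m ∈ Ioc i j, ‖v m‖) ^ 2 ≤ (#(Ioc i j) : ℝ) * ∑ m ∈ Ioc i j, ‖v m‖ ^ 2 :=
      sq_sum_le_card_mul_sum_sq
    have h4 : (#(Ioc i j) : ℝ) = (j : ℝ) - i := by
      rw [Nat.card_Ioc, Nat.cast_sub hij]
    rw [h4] at h3
    linarith
  -- coefficient computation
  have hkR : (0:ℝ) < k := by exact_mod_cast hk
  have hcoeff : ∀ m ∈ Ioc 0 k,
      (∑ j ∈ range k, ∑ i ∈ range j,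
        (if i < m ∧ m ≤ j then ((j : ℝ) - (i : ℝ)) * ‖v m‖ ^ 2 else 0))
      ≤ (k : ℝ) ^ 3 / 8 * ‖v m‖ ^ 2 := by
    intro m hm
    rw [Finset.mem_Ioc] at hm
    have hm1 : 1 ≤ m := hm.1
    have hmk : m ≤ k := hm.2
    have hinner : ∀ j ∈ range k, (∑ i ∈ range j,
        (if i < m ∧ m ≤ j then ((j : ℝ) - (i : ℝ)) * ‖v m‖ ^ 2 else 0))
        = if m ≤ j then ((m : ℝ) * j - m * (m - 1) / 2) * ‖v m‖ ^ 2 else 0 := by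
      intro j _
      by_cases hmj : m ≤ j
      · rw [if_pos hmj]
        have hfil : (range j).filter (fun i => i < m ∧ m ≤ j) = range m := by
          ext i
          simp only [Finset.mem_filter, Finset.mem_range]
          omega
        rw [← Finset.sum_filter, hfil, ← Finset.sum_mul]
        congr 1
        rw [Finset.sum_sub_distrib, Finset.sum_const, Finset.card_range,
          sum_range_cast_real, nsmul_eq_mul]
      · rw [if_neg hmj]
        apply Finset.sum_eq_zero
        intro i _
        rw [if_neg (by tauto)]
    rw [Finset.sum_congr rfl hinner]
    have hfil2 : (range k).filter (fun j => m ≤ j) = Ico m k := by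
      ext j
      simp only [Finset.mem_filter, Finset.mem_range, Finset.mem_Ico]
      omega
    rw [← Finset.sum_filter, hfil2]
    have hIco : ∑ j ∈ Ico m k, (((m : ℝ) * j - m * (m - 1) / 2) * ‖v m‖ ^ 2)
        = ((m : ℝ) * (k * (k - 1) / 2) - k * (m * (m - 1) / 2)
           - (m * (m * (m - 1) / 2) - m * (m * (m - 1) / 2))) * ‖v m‖ ^ 2 := by
      rw [Finset.sum_Ico_eq_sub _ hmk]
      have hs : ∀ n : ℕ, ∑ j ∈ range n, (((m : ℝ) * j - m * (m - 1) / 2) * ‖v m‖ ^ 2)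
          = ((m : ℝ) * (n * (n - 1) / 2) - n * (m * (m - 1) / 2)) * ‖v m‖ ^ 2 := by
        intro n
        rw [← Finset.sum_mul]
        congr 1
        rw [Finset.sum_sub_distrib, ← Finset.mul_sum, sum_range_cast_real,
          Finset.sum_const, Finset.card_range, nsmul_eq_mul]
      rw [hs k, hs m]
      ring
    rw [hIco]
    apply mul_le_mul_of_nonneg_right _ (by positivity)
    have hmR : (1:ℝ) ≤ (m:ℝ) := by exact_mod_cast hm1
    have hmkR : (m:ℝ) ≤ (k:ℝ) := by exact_mod_cast hmk
    nlinarith [sq_nonneg ((k:ℝ) - 2 * m), sq_nonneg ((k:ℝ) - m)]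
  have hsum0 : ∑ i ∈ range k, (x i - xbar k) = 0 := by
    rw [Finset.sum_sub_distrib, Finset.sum_const, Finset.card_range,
      ← Nat.cast_smul_eq_nsmul ℝ k (xbar k), hxbar k hk, smul_smul,
      mul_one_div_cancel (ne_of_gt hkR), one_smul, sub_self]
  have hSsum : ∑ m ∈ Ioc 0 k, ‖v m‖ ^ 2 = S k := by
    rw [hS]
    congr 1
  have hvar : ∑ i ∈ range k, ‖x i - xbar k‖ ^ 2 ≤ (k : ℝ) ^ 2 * S k / 8 := by
    have hident := variance_ident k (fun i => x i - xbar k) hsum0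
    have hident' : ∑ j ∈ range k, ∑ i ∈ range j, ‖x j - x i‖ ^ 2
        = k * ∑ i ∈ range k, ‖x i - xbar k‖ ^ 2 := by
      rw [← hident]
      congr 1; ext j; congr 1; ext i; congr 2; abel
    have hT : ∑ j ∈ range k, ∑ i ∈ range j, ‖x j - x i‖ ^ 2
        ≤ ∑ m ∈ Ioc 0 k, ((k : ℝ) ^ 3 / 8 * ‖v m‖ ^ 2) := by
      calc ∑ j ∈ range k, ∑ i ∈ range j, ‖x j - x i‖ ^ 2
          ≤ ∑ j ∈ range k, ∑ i ∈ range j, ∑ m ∈ Ioc 0 k,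
              (if i < m ∧ m ≤ j then ((j : ℝ) - (i : ℝ)) * ‖v m‖ ^ 2 else 0) := by
            apply Finset.sum_le_sum; intro j hj
            apply Finset.sum_le_sum; intro i hi
            rw [Finset.mem_range] at hj hi
            have hfil : (Ioc 0 k).filter (fun m => i < m ∧ m ≤ j) = Ioc i j := by
              ext m
              simp only [Finset.mem_filter, Finset.mem_Ioc]
              omega
            calc ‖x j - x i‖ ^ 2
                ≤ ((j : ℝ) - i) * ∑ m ∈ Ioc i j, ‖v m‖ ^ 2 := hCS i j (le_of_lt hi)
              _ = ∑ m ∈ Ioc i j, ((j : ℝ) - (i : ℝ)) * ‖v m‖ ^ 2 := Finset.mul_sum _ _ _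
              _ = ∑ m ∈ Ioc 0 k,
                    (if i < m ∧ m ≤ j then ((j : ℝ) - (i : ℝ)) * ‖v m‖ ^ 2 else 0) := by
                  rw [← hfil, Finset.sum_filter]
        _ = ∑ j ∈ range k, ∑ m ∈ Ioc 0 k, ∑ i ∈ range j,
              (if i < m ∧ m ≤ j then ((j : ℝ) - (i : ℝ)) * ‖v m‖ ^ 2 else 0) := by
            apply Finset.sum_congr rfl; intro j _; exact Finset.sum_comm
        _ = ∑ m ∈ Ioc 0 k, ∑ j ∈ range k, ∑ i ∈ range j,
              (if i < m ∧ m ≤ j then ((j : ℝ) - (i : ℝ)) * ‖v m‖ ^ 2 else 0) :=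
            Finset.sum_comm
        _ ≤ ∑ m ∈ Ioc 0 k, (k : ℝ) ^ 3 / 8 * ‖v m‖ ^ 2 := Finset.sum_le_sum hcoeff
    rw [hident'] at hT
    rw [← Finset.mul_sum, hSsum] at hT
    rw [← mul_le_mul_iff_right₀ hkR]
    calc (k : ℝ) * ∑ i ∈ range k, ‖x i - xbar k‖ ^ 2 ≤ (k : ℝ) ^ 3 / 8 * S k := hT
      _ = (k : ℝ) * ((k : ℝ) ^ 2 * S k / 8) := by ring
  -- v as cumulative gradient sum
  have hvsum : ∀ n, v n = (-(1 / ℓ)) • ∑ i ∈ range n, G (x i) := by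
    intro n
    induction n with
    | zero => simp [hv0]
    | succ n ih =>
      have h1 := hv (n + 1) (by omega)
      simp only [Nat.add_sub_cancel] at h1
      rw [h1, ih, Finset.sum_range_succ, smul_add]
      module
  have hGsum : ∑ i ∈ range k, G (x i) = (-ℓ) • v k := by
    rw [hvsum k, smul_smul]
    rw [show (-ℓ) * (-(1 / ℓ)) = 1 by field_simp, one_smul]
  set A := fderiv ℝ G (xbar k) with hA
  have htay : ∀ i, ‖G (x i) - G (xbar k) - A (x i - xbar k)‖
      ≤ H / (1 + ν) * ‖x i - xbar k‖ ^ ((1:ℝ) + ν) :=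
    fun i => taylor_holder_s7 d G hf' ν hν0 H hH hHolder (xbar k) (x i)
  have hdecomp : (k : ℝ) • G (xbar k)
      = ∑ i ∈ range k, G (x i)
        - ∑ i ∈ range k, (G (x i) - G (xbar k) - A (x i - xbar k)) := by
    have h1 : ∑ i ∈ range k, A (x i - xbar k) = 0 := by
      rw [← map_sum, hsum0, map_zero]
    rw [Finset.sum_sub_distrib, Finset.sum_sub_distrib, h1, Finset.sum_const,
      Finset.card_range, ← Nat.cast_smul_eq_nsmul ℝ]
    abel
  have hGxbar : G (xbar k) = (1 / (k : ℝ)) •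
      ((-ℓ) • v k - ∑ i ∈ range k, (G (x i) - G (xbar k) - A (x i - xbar k))) := by
    rw [← hGsum, ← hdecomp, smul_smul, one_div_mul_cancel (ne_of_gt hkR), one_smul]
  have hnormbound : ‖G (xbar k)‖ ≤ (1 / (k : ℝ)) *
      (ℓ * ‖v k‖ + ∑ i ∈ range k, (H / (1 + ν) * ‖x i - xbar k‖ ^ ((1:ℝ) + ν))) := by
    rw [hGxbar, norm_smul, Real.norm_eq_abs, abs_of_pos (by positivity)]
    apply mul_le_mul_of_nonneg_left _ (by positivity)
    calc ‖(-ℓ) • v k - ∑ i ∈ range k, (G (x i) - G (xbar k) - A (x i - xbar k))‖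
        ≤ ‖(-ℓ) • v k‖ + ‖∑ i ∈ range k, (G (x i) - G (xbar k) - A (x i - xbar k))‖ :=
          norm_sub_le _ _
      _ ≤ ℓ * ‖v k‖ + ∑ i ∈ range k, (H / (1 + ν) * ‖x i - xbar k‖ ^ ((1:ℝ) + ν)) := by
          apply add_le_add
          · rw [norm_smul, Real.norm_eq_abs, abs_neg, abs_of_pos hℓ]
          · exact (norm_sum_le _ _).trans (Finset.sum_le_sum (fun i _ => htay i))
  -- power mean
  have h1ν : (0:ℝ) < 1 + ν := by linarith
  have hq1 : (1:ℝ) ≤ 2 / (1 + ν) := by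
    rw [le_div_iff₀ h1ν]; linarith
  have hz : ∀ i : ℕ, (‖x i - xbar k‖ ^ ((1:ℝ) + ν)) ^ ((2:ℝ) / (1 + ν))
      = ‖x i - xbar k‖ ^ 2 := by
    intro i
    rw [← Real.rpow_mul (norm_nonneg _), show ((1:ℝ) + ν) * (2 / (1 + ν)) = 2 by
      field_simp, show ((2:ℝ)) = ((2:ℕ):ℝ) by norm_num, Real.rpow_natCast]
  have hpm : ∑ i ∈ range k, (1 / (k:ℝ)) * ‖x i - xbar k‖ ^ ((1:ℝ) + ν)
      ≤ (∑ i ∈ range k, (1 / (k:ℝ)) * ‖x i - xbar k‖ ^ 2) ^ ((1 + ν) / 2) := by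
    have hw : ∑ _i ∈ range k, (1 / (k:ℝ)) = 1 := by
      rw [Finset.sum_const, Finset.card_range, nsmul_eq_mul, mul_one_div,
        div_self (ne_of_gt hkR)]
    have := Real.arith_mean_le_rpow_mean (range k) (fun _ => 1 / (k:ℝ))
      (fun i => ‖x i - xbar k‖ ^ ((1:ℝ) + ν)) (fun i _ => by positivity) hw
      (fun i _ => by positivity) (p := 2 / (1 + ν)) hq1
    simp only [hz] at this
    rwa [one_div_div] at this
  have hSnn : 0 ≤ S k := by
    rw [hS]; positivity
  have hbase : ∑ i ∈ range k, (1 / (k:ℝ)) * ‖x i - xbar k‖ ^ 2 ≤ (k : ℝ) * S k / 8 := by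
    rw [← Finset.mul_sum]
    calc (1 / (k:ℝ)) * ∑ i ∈ range k, ‖x i - xbar k‖ ^ 2
        ≤ (1 / (k:ℝ)) * ((k : ℝ) ^ 2 * S k / 8) := by
          apply mul_le_mul_of_nonneg_left hvar (by positivity)
      _ = (k : ℝ) * S k / 8 := by field_simp
  have hfinal : ∑ i ∈ range k, ‖x i - xbar k‖ ^ ((1:ℝ) + ν)
      ≤ (k : ℝ) * (((k : ℝ) * S k) / 8) ^ ((1 + ν) / 2) := by
    have h2 : ∑ i ∈ range k, ‖x i - xbar k‖ ^ ((1:ℝ) + ν)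
        = (k : ℝ) * ∑ i ∈ range k, (1 / (k:ℝ)) * ‖x i - xbar k‖ ^ ((1:ℝ) + ν) := by
      rw [← Finset.mul_sum, ← mul_assoc, mul_one_div, div_self (ne_of_gt hkR), one_mul]
    rw [h2]
    apply mul_le_mul_of_nonneg_left _ (le_of_lt hkR)
    calc ∑ i ∈ range k, (1 / (k:ℝ)) * ‖x i - xbar k‖ ^ ((1:ℝ) + ν)
        ≤ (∑ i ∈ range k, (1 / (k:ℝ)) * ‖x i - xbar k‖ ^ 2) ^ ((1 + ν) / 2) := hpm
      _ ≤ (((k : ℝ) * S k) / 8) ^ ((1 + ν) / 2) := by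
          apply Real.rpow_le_rpow _ hbase (by positivity)
          positivity
  calc ‖G (xbar k)‖
      ≤ (1 / (k : ℝ)) *
        (ℓ * ‖v k‖ + ∑ i ∈ range k, (H / (1 + ν) * ‖x i - xbar k‖ ^ ((1:ℝ) + ν))) :=
        hnormbound
    _ ≤ (1 / (k : ℝ)) *
        (ℓ * ‖v k‖ + H / (1 + ν) * ((k : ℝ) * (((k : ℝ) * S k) / 8) ^ ((1 + ν) / 2))) := by
        apply mul_le_mul_of_nonneg_left _ (by positivity)
        apply add_le_add_right
        rw [← Finset.mul_sum]
        apply mul_le_mul_of_nonneg_left hfinal (by positivity)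
    _ = (ℓ / k) * ‖v k‖ + H / (1 + ν) * (((k : ℝ) * S k) / 8) ^ ((1 + ν) / 2) := by
        field_simp
end

section
/- Let v₁,…,vₖ₋₁ ∈ ℝᵈ and let x₀,…,xₖ₋₁ be defined by xⱼ = x₀ + Σ_{l=1}^{j} v_l. Then Σ_{0 ≤ i < j < k} ‖xᵢ − xⱼ‖² ≤ (k/2) Σ_{l=1}^{k−1} l (k − l) ‖v_l‖² ≤ (k³/8) Σ_{l=1}^{k−1} ‖v_l‖². -/
open Finset

lemma sum_range_cast (n : ℕ) : ∑ i ∈ range n, (i:ℝ) = n*(n-1)/2 := by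
  induction n with
  | zero => simp
  | succ n ih => rw [sum_range_succ, ih]; push_cast; ring

lemma coeff_sum (k l : ℕ) (hl : 1 ≤ l) (hlk : l ≤ k - 1) :
    ∑ i ∈ range k, ∑ j ∈ range k, (if i < l ∧ l ≤ j then ((j:ℝ) - i) else 0)
      = k/2 * (l * (k - l)) := by
  have hk : l < k := by omega
  have h1 : ∀ i ∈ range k, (∑ j ∈ range k, if i < l ∧ l ≤ j then ((j:ℝ) - i) else 0)
      = if i < l then ∑ j ∈ Ico l k, ((j:ℝ) - i) else 0 := by
    intro i _
    split_ifs with h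
    · rw [show Ico l k = (range k).filter (fun j => l ≤ j) by ext j; simp [mem_Ico, and_comm],
        sum_filter]
      simp [h]
    · simp [h]
  rw [sum_congr rfl h1, ← sum_filter,
    show (range k).filter (fun i => i < l) = range l by ext i; simp; omega]
  have h2 : ∀ i ∈ range l, ∑ j ∈ Ico l k, ((j:ℝ) - i)
      = (k*(k-1)/2 - l*(l-1)/2) - (k - l) * i := by
    intro i _
    rw [sum_sub_distrib, sum_const, Finset.sum_Ico_eq_sub _ hk.le]
    rw [sum_range_cast, sum_range_cast, Nat.card_Ico, nsmul_eq_mul, Nat.cast_sub hk.le]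
  rw [sum_congr rfl h2, sum_sub_distrib, sum_const, ← mul_sum, sum_range_cast, card_range]
  ring

theorem pairwise_dist_bound (d k : ℕ)
    (x₀ : EuclideanSpace ℝ (Fin d)) (v : ℕ → EuclideanSpace ℝ (Fin d))
    (x : ℕ → EuclideanSpace ℝ (Fin d))
    (hx : ∀ j, j < k → x j = x₀ + ∑ l ∈ Icc 1 j, v l) :
    (∑ i ∈ range k, ∑ j ∈ range k with i < j, ‖x i - x j‖ ^ 2
        ≤ (k : ℝ) / 2 * ∑ l ∈ Icc 1 (k - 1), (l : ℝ) * ((k : ℝ) - l) * ‖v l‖ ^ 2) ∧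
    ((k : ℝ) / 2 * ∑ l ∈ Icc 1 (k - 1), (l : ℝ) * ((k : ℝ) - l) * ‖v l‖ ^ 2
        ≤ (k : ℝ) ^ 3 / 8 * ∑ l ∈ Icc 1 (k - 1), ‖v l‖ ^ 2) := by
  constructor
  · -- first inequality
    have step1 : ∑ i ∈ range k, ∑ j ∈ range k with i < j, ‖x i - x j‖ ^ 2
        ≤ ∑ i ∈ range k, ∑ j ∈ range k with i < j,
            ((j:ℝ) - i) * ∑ l ∈ Ioc i j, ‖v l‖ ^ 2 := by
      apply sum_le_sum; intro i _
      apply sum_le_sum; intro j hj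
      simp only [mem_filter, mem_range] at hj
      obtain ⟨hjk, hij⟩ := hj
      have hik : i < k := lt_trans hij hjk
      have hxij : x i - x j = -∑ l ∈ Ioc i j, v l := by
        rw [hx i hik, hx j hjk]
        have h0 : Finset.Icc 1 i = Finset.Ioc 0 i := by rw [← Finset.Icc_add_one_left_eq_Ioc]; rfl
        have h1 : Finset.Icc 1 j = Finset.Ioc 0 j := by rw [← Finset.Icc_add_one_left_eq_Ioc]; rfl
        rw [h0, h1, ← Finset.sum_Ioc_consecutive v (Nat.zero_le i) hij.le]
        abel
      rw [hxij, norm_neg]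
      calc ‖∑ l ∈ Ioc i j, v l‖ ^ 2 ≤ (∑ l ∈ Ioc i j, ‖v l‖) ^ 2 :=
            pow_le_pow_left₀ (norm_nonneg _) (norm_sum_le _ _) 2
        _ ≤ #(Ioc i j) * ∑ l ∈ Ioc i j, ‖v l‖ ^ 2 := sq_sum_le_card_mul_sum_sq
        _ = ((j:ℝ) - i) * ∑ l ∈ Ioc i j, ‖v l‖ ^ 2 := by
            rw [Nat.card_Ioc, Nat.cast_sub hij.le]
    refine step1.trans (le_of_eq ?_)
    have step2 : ∀ i ∈ range k, (∑ j ∈ range k with i < j,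
          ((j:ℝ) - i) * ∑ l ∈ Ioc i j, ‖v l‖ ^ 2)
        = ∑ j ∈ range k, ∑ l ∈ Icc 1 (k-1),
            (if i < l ∧ l ≤ j then ((j:ℝ) - i) * ‖v l‖ ^ 2 else 0) := by
      intro i _
      rw [sum_filter]
      apply sum_congr rfl
      intro j hj
      simp only [mem_range] at hj
      split_ifs with h
      · rw [← sum_filter,
          show (Icc 1 (k-1)).filter (fun l => i < l ∧ l ≤ j) = Ioc i j from by
            ext l
            simp only [mem_filter, mem_Icc, mem_Ioc]
            omega,
          mul_sum]
      · symm
        apply sum_eq_zero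
        intro l hl
        exact if_neg (by omega)
    rw [sum_congr rfl step2]
    rw [sum_congr rfl (fun i (_ : i ∈ range k) =>
      Finset.sum_comm (s := range k) (t := Icc 1 (k-1))), Finset.sum_comm]
    calc ∑ l ∈ Icc 1 (k-1), ∑ i ∈ range k, ∑ j ∈ range k,
            (if i < l ∧ l ≤ j then ((j:ℝ) - i) * ‖v l‖ ^ 2 else 0)
        = ∑ l ∈ Icc 1 (k-1),
            (∑ i ∈ range k, ∑ j ∈ range k, if i < l ∧ l ≤ j then ((j:ℝ) - i) else 0)
              * ‖v l‖ ^ 2 := by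
          apply sum_congr rfl; intro l _
          rw [sum_mul]
          apply sum_congr rfl; intro i _
          rw [sum_mul]
          apply sum_congr rfl; intro j _
          rw [ite_mul, zero_mul]
      _ = ∑ l ∈ Icc 1 (k-1), ((k:ℝ)/2 * (l * ((k:ℝ) - l))) * ‖v l‖ ^ 2 := by
          apply sum_congr rfl; intro l hl
          simp only [mem_Icc] at hl
          rw [coeff_sum k l hl.1 hl.2]
      _ = (k : ℝ) / 2 * ∑ l ∈ Icc 1 (k - 1), (l : ℝ) * ((k : ℝ) - l) * ‖v l‖ ^ 2 := by
          rw [mul_sum]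
          apply sum_congr rfl; intros; ring
  · -- second inequality
    rw [mul_sum, mul_sum]
    apply sum_le_sum
    intro l hl
    simp only [mem_Icc] at hl
    have h0 : (0:ℝ) ≤ ‖v l‖^2 := by positivity
    have hk0 : (0:ℝ) ≤ (k:ℝ) := Nat.cast_nonneg k
    nlinarith [mul_nonneg (mul_nonneg hk0 (sq_nonneg ((k:ℝ) - 2*l))) h0]
end

section
/- Let f : ℝᵈ → ℝ be differentiable with L-Lipschitz gradient, and let the heavy-ball iterates satisfy v₀ = 0, vₖ = vₖ₋₁ − (1/ℓ)∇f(xₖ₋₁), xₖ = xₖ₋₁ + vₖ. If the descent condition f(xᵢ) − f(xᵢ₋₁) ≤ ⟨∇f(xᵢ₋₁), vᵢ⟩ + (ℓ/2)‖vᵢ‖² holds for 1 ≤ i ≤ k, and if hₖ₋₁ ≥ 0 satisfies f(xᵢ) − f(xᵢ₋₁) ≤ (1/2)⟨∇f(xᵢ₋₁)+∇f(xᵢ), vᵢ⟩ + (hₖ₋₁/3)‖vᵢ‖² for 1 ≤ i < k, together with k(k−1)hₖ₋₁ ≤ (3/8)ℓ, then min_{1≤i≤k} f(xᵢ) ≤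 f(x₀) − ℓ Sₖ/(4k), where Sₖ = Σ_{i=1}^{k}‖vᵢ‖². -/
open Finset

set_option maxHeartbeats 1000000 in
theorem decrease_epoch (d : ℕ) (f : EuclideanSpace ℝ (Fin d) → ℝ)
    (hf : ∀ x, DifferentiableAt ℝ f x)
    (L : ℝ) (hL : 0 < L)
    (hLip : ∀ x y, ‖gradient f x - gradient f y‖ ≤ L * ‖x - y‖)
    (ℓ : ℝ) (hℓ : 0 < ℓ)
    (x v : ℕ → EuclideanSpace ℝ (Fin d))
    (hv0 : v 0 = 0)
    (hv : ∀ i, 1 ≤ i → v i = v (i - 1) - (1 / ℓ) • gradient f (x (i - 1)))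
    (hx : ∀ i, 1 ≤ i → x i = x (i - 1) + v i)
    (S : ℕ → ℝ) (hS : ∀ i, S i = ∑ j ∈ Icc 1 i, ‖v j‖ ^ 2)
    (k : ℕ) (hk : 1 ≤ k)
    (hdesc : ∀ i, 1 ≤ i → i ≤ k →
      f (x i) - f (x (i - 1)) ≤ inner ℝ (gradient f (x (i - 1))) (v i) + ℓ / 2 * ‖v i‖ ^ 2)
    (h : ℝ) (hh : 0 ≤ h)
    (hest : ∀ i, 1 ≤ i → i < k →
      f (x i) - f (x (i - 1)) ≤
        (1 / 2) * inner ℝ (gradient f (x (i - 1)) + gradient f (x i)) (v i) + h / 3 * ‖v i‖ ^ 2)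
    (hrestart : (k : ℝ) * ((k : ℝ) - 1) * h ≤ 3 / 8 * ℓ)
    (hne : (Icc 1 k).Nonempty) :
    (Icc 1 k).inf' hne (fun i => f (x i)) ≤ f (x 0) - ℓ * S k / (4 * k) := by
  -- gradient in terms of velocities
  have hgrad : ∀ i : ℕ, gradient f (x i) = ℓ • (v i - v (i + 1)) := by
    intro i
    have h1 := hv (i + 1) (by omega)
    simp only [Nat.add_sub_cancel] at h1
    have : v i - v (i + 1) = (1 / ℓ) • gradient f (x i) := by
      rw [h1]; abel
    rw [this, smul_smul, mul_one_div, div_self (ne_of_gt hℓ), one_smul]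
  have hSsucc : ∀ n : ℕ, S (n + 1) = S n + ‖v (n + 1)‖ ^ 2 := by
    intro n
    rw [hS, hS, Finset.sum_Icc_succ_top (by omega)]
  have hvnn : ∀ j : ℕ, (0:ℝ) ≤ ‖v j‖ ^ 2 := fun j => by positivity
  -- telescoped estimate
  have hB : ∀ m, m < k → f (x m) - f (x 0) ≤
      -(ℓ / 2) * (inner ℝ (v m) (v (m + 1)) : ℝ) + h / 3 * S m := by
    intro m
    induction m with
    | zero =>
      intro _
      simp [hv0, hS]
    | succ n ih =>
      intro hlt
      have hBn := ih (by omega)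
      have he := hest (n + 1) (by omega) hlt
      simp only [Nat.add_sub_cancel] at he
      rw [hgrad n, hgrad (n + 1)] at he
      simp only [inner_add_left, inner_sub_left, real_inner_smul_left] at he
      rw [real_inner_comm (v (n + 1)) (v (n + 1 + 1))] at he
      rw [hSsucc n]
      linarith
  -- paired decrease
  have hA : ∀ m, m < k → f (x m) + f (x (m + 1)) ≤
      2 * f (x 0) + 2 * h / 3 * S m - ℓ / 2 * ‖v (m + 1)‖ ^ 2 := by
    intro m hm
    have hBm := hB m hm
    have hd := hdesc (m + 1) (by omega) hm
    simp only [Nat.add_sub_cancel] at hd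
    rw [hgrad m] at hd
    simp only [inner_sub_left, real_inner_smul_left] at hd
    rw [real_inner_self_eq_norm_sq (v (m + 1))] at hd
    linarith
  -- sum it up
  have hsum : ∑ m ∈ range k, (f (x m) + f (x (m + 1))) ≤
      ∑ m ∈ range k, (2 * f (x 0) + 2 * h / 3 * S m - ℓ / 2 * ‖v (m + 1)‖ ^ 2) :=
    Finset.sum_le_sum fun m hm => hA m (Finset.mem_range.mp hm)
  have hSk : S k = ∑ m ∈ range k, ‖v (m + 1)‖ ^ 2 := by
    rw [hS, ← Finset.Ico_add_one_right_eq_Icc, Finset.sum_Ico_eq_sum_range]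
    simp [add_comm]
  have hSknn : 0 ≤ S k := by
    rw [hSk]; exact Finset.sum_nonneg fun m _ => hvnn _
  have hSmono : ∀ m, m ≤ k → S m ≤ S k := by
    intro m hm
    rw [hS, hS]
    exact Finset.sum_le_sum_of_subset_of_nonneg (Finset.Icc_subset_Icc_right hm)
      (fun j _ _ => hvnn j)
  set μ := (Icc 1 k).inf' hne (fun i => f (x i)) with hμ
  have hμle : ∀ i, 1 ≤ i → i ≤ k → μ ≤ f (x i) := fun i h1 h2 =>
    Finset.inf'_le _ (Finset.mem_Icc.mpr ⟨h1, h2⟩)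
  clear_value μ
  have hS0 : S 0 = 0 := by simp [hS]
  obtain ⟨n, rfl⟩ : ∃ n, k = n + 1 := ⟨k - 1, by omega⟩
  -- bound ∑ S m
  have hT1 : ∑ m ∈ range (n + 1), S m ≤ (n : ℝ) * S (n + 1) := by
    rw [Finset.sum_range_succ', hS0, add_zero]
    calc ∑ i ∈ range n, S (i + 1) ≤ ∑ i ∈ range n, S (n + 1) :=
          Finset.sum_le_sum fun i hi => hSmono _ (by have := Finset.mem_range.mp hi; omega)
      _ = (n : ℝ) * S (n + 1) := by rw [Finset.sum_const, Finset.card_range, nsmul_eq_mul]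
  -- lower bounds on left sums
  have h1 : f (x 0) + (n : ℝ) * μ ≤ ∑ m ∈ range (n + 1), f (x m) := by
    rw [Finset.sum_range_succ']
    have : (n : ℝ) * μ ≤ ∑ i ∈ range n, f (x (i + 1)) := by
      calc (n : ℝ) * μ = ∑ i ∈ range n, μ := by
            rw [Finset.sum_const, Finset.card_range, nsmul_eq_mul]
        _ ≤ _ := Finset.sum_le_sum fun i hi =>
            hμle _ (by omega) (by have := Finset.mem_range.mp hi; omega)
    linarith
  have h2 : ((n : ℝ) + 1) * μ ≤ ∑ m ∈ range (n + 1), f (x (m + 1)) := by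
    calc ((n : ℝ) + 1) * μ = ∑ m ∈ range (n + 1), μ := by
          rw [Finset.sum_const, Finset.card_range]; push_cast [nsmul_eq_mul]; ring
      _ ≤ _ := Finset.sum_le_sum fun m hm =>
          hμle _ (by omega) (by have := Finset.mem_range.mp hm; omega)
  -- rewrite sums
  have hLHS : ∑ m ∈ range (n + 1), (f (x m) + f (x (m + 1))) =
      ∑ m ∈ range (n + 1), f (x m) + ∑ m ∈ range (n + 1), f (x (m + 1)) :=
    Finset.sum_add_distrib
  have hRHS : ∑ m ∈ range (n + 1), (2 * f (x 0) + 2 * h / 3 * S m - ℓ / 2 * ‖v (m + 1)‖ ^ 2) =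
      ((n : ℝ) + 1) * (2 * f (x 0)) + 2 * h / 3 * (∑ m ∈ range (n + 1), S m)
        - ℓ / 2 * S (n + 1) := by
    rw [hSk, Finset.sum_sub_distrib, Finset.sum_add_distrib, Finset.sum_const,
      Finset.card_range, ← Finset.mul_sum, ← Finset.mul_sum, nsmul_eq_mul]
    push_cast
    ring
  rw [hLHS, hRHS] at hsum
  -- assemble the main inequality
  set K : ℝ := (n : ℝ) + 1 with hK
  clear_value K
  have hK1 : (1 : ℝ) ≤ K := by rw [hK]; have'  : (0:ℝ) ≤ (n:ℝ) := Nat.cast_nonneg n; linarith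
  have hKpos : (0 : ℝ) < K := by linarith
  have hcast : ((n + 1 : ℕ) : ℝ) = K := by push_cast [hK]; ring
  rw [hcast] at hrestart
  have hmain : (2 * K - 1) * μ ≤ (2 * K - 1) * f (x 0) +
      2 * h / 3 * ((K - 1) * S (n + 1)) - ℓ / 2 * S (n + 1) := by
    have hT1' := mul_le_mul_of_nonneg_left hT1 (by positivity : (0:ℝ) ≤ 2 * h / 3)
    have hn : (n : ℝ) = K - 1 := by rw [hK]; ring
    rw [hn] at h1 hT1'
    linarith [hsum, h1, h2, hT1']
  -- final algebra
  have hc : 2 / 3 * h * (K - 1) * (4 * K) ≤ ℓ := by linarith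
  have h2K : (0 : ℝ) < 2 * K - 1 := by linarith
  have key : (ℓ / 2 - 2 / 3 * h * (K - 1)) * S (n + 1) ≤ (2 * K - 1) * (f (x 0) - μ) := by
    linarith [hmain]
  have step1 : ℓ * S (n + 1) * (2 * K - 1) ≤ (f (x 0) - μ) * (4 * K) * (2 * K - 1) := by
    have e1 := mul_le_mul_of_nonneg_right key (by positivity : (0:ℝ) ≤ 4 * K)
    have e2 := mul_le_mul_of_nonneg_right hc hSknn
    linarith [e1, e2]
  have step2 : ℓ * S (n + 1) ≤ (f (x 0) - μ) * (4 * K) :=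
    le_of_mul_le_mul_right step1 h2K
  rw [hcast]
  have hdiv : ℓ * S (n + 1) / (4 * K) ≤ f (x 0) - μ := by
    rw [div_le_iff₀ (by positivity : (0:ℝ) < 4 * K)]
    linarith [step2]
  linarith [hdiv]
end
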